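/- arXiv:1205.4885 — 6 statements merged into one kernel-verified Lean document; each statement's English description precedes it below -/
import Mathlib

section
/- Let α and β be columns over A with α ⋡ β. Then the tableau P(αβ) contains at most two columns. -/
/-! Common definitions: Plactic monoid, columns, rows, tableaux, the
rewriting system `(C,T)`. -/

/-- Words over the ordered alphabet `A = {1 < 2 < ⋯ < n}`, modelled as `Fin n`. -/
abbrev Word (n : ℕ) := List (Fin n)

/-- A single application, in context, of one of the Knuth defining relations
`(xzy, zxy)` for `x ≤ y < z` and `(yxz, yzx)` for `x < y ≤ z`. -/
inductive KnuthStep (n : ℕ) : Word n → Word n → Prop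
  | left (u v : Word n) (x y z : Fin n) (h1 : x ≤ y) (h2 : y < z) :
      KnuthStep n (u ++ [x, z, y] ++ v) (u ++ [z, x, y] ++ v)
  | right (u v : Word n) (x y z : Fin n) (h1 : x < y) (h2 : y ≤ z) :
      KnuthStep n (u ++ [y, x, z] ++ v) (u ++ [y, z, x] ++ v)

/-- `u =_{M_n} v`: the words `u`, `v` represent the same element of the Plactic
monoid `M_n`, i.e. they are equivalent under the congruence generated by the
Knuth relations. -/
def PlacticEq (n : ℕ) : Word n → Word n → Prop := Relation.EqvGen (KnuthStep n)

/-- A column: a nonempty strictly decreasing word. -/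
def IsColumn {n : ℕ} (w : Word n) : Prop := w ≠ [] ∧ w.Chain' (fun a b => b < a)

/-- A row: a nondecreasing word. -/
def IsRow {n : ℕ} (w : Word n) : Prop := w.Chain' (fun a b => a ≤ b)

/-- The row `α` dominates the row `β`: `|α| ≤ |β|` and `α_i > β_i` for all
`i ≤ |α|`. -/
def Dominates {n : ℕ} (α β : Word n) : Prop :=
  α.length ≤ β.length ∧
    ∀ i (hα : i < α.length) (hβ : i < β.length), β[i]'hβ < α[i]'hα

/-- `rs` is the list of rows, from top to bottom, of (the planar representation
of) a tableau: each row is a nonempty row, and each row dominates the next. -/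
def IsTableauRows {n : ℕ} (rs : List (Word n)) : Prop :=
  (∀ r ∈ rs, r ≠ [] ∧ IsRow r) ∧ rs.Chain' Dominates

/-- `w` is a tableau: it is the product, from top to bottom, of the rows of a
planar tableau (this decomposition is automatically the decomposition of `w`
into rows of maximal length). -/
def IsTableau {n : ℕ} (w : Word n) : Prop :=
  ∃ rs : List (Word n), IsTableauRows rs ∧ w = rs.flatten

/-- The order `⪰` on columns: for `α = α_k⋯α_1` and `β = β_l⋯β_1` (so that the
letters of a column are indexed from the bottom, i.e. from the right-hand end
of the word), `α ⪰ β` iff `k ≥ l` and `α_i ≤ β_i` for all `i ≤ l`; that is,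
`α` may appear immediately to the left of `β` in a tableau. -/
def ColGE {n : ℕ} (α β : Word n) : Prop :=
  β.length ≤ α.length ∧
    ∀ (i : ℕ) (a b : Fin n), α.reverse[i]? = some a → β.reverse[i]? = some b → a ≤ b

/-- The finite alphabet `C = {c_α : α a column}`. -/
abbrev CLetter (n : ℕ) := {w : Word n // IsColumn w}

/-- Words over the alphabet `C`. -/
abbrev CWord (n : ℕ) := List (CLetter n)

/-- The image of a word over `C` under `c_α ↦ α`. -/
def evalC {n : ℕ} (u : CWord n) : Word n := (u.map Subtype.val).flatten

/-- `SingleColP u w`: the tableau `P(u)` consists of a single column, namely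
`w`.  (Since tableaux form a cross-section of `M_n`, and a word which is a
single column is itself a tableau, this holds precisely when `w` is a column
representing the same element of `M_n` as `u`.) -/
def SingleColP (n : ℕ) (u w : Word n) : Prop := IsColumn w ∧ PlacticEq n u w

/-- `TwoColP u w₁ w₂`: the tableau `P(u)` consists of exactly two columns, with
left column `w₁` and right column `w₂`.  (Since tableaux form a cross-section
of `M_n`, and the words `w₁ w₂` with `w₁ ⪰ w₂` columns are exactly the column
readings of two-column tableaux, this holds precisely when `w₁, w₂` are columns
with `w₁ ⪰ w₂` whose concatenation represents the same element of `M_n` as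
`u`.) -/
def TwoColP (n : ℕ) (u w₁ w₂ : Word n) : Prop :=
  IsColumn w₁ ∧ IsColumn w₂ ∧ ColGE w₁ w₂ ∧ PlacticEq n u (w₁ ++ w₂)

/-- The rules of the rewriting system `T` on `C*`: for columns `α ⋡ β`,
`c_α c_β → c_γ` if `P(αβ)` is the single column `γ`, and `c_α c_β → c_γ c_δ`
if `P(αβ)` has exactly two columns `γ` (left) and `δ` (right). -/
inductive TRule (n : ℕ) : CWord n → CWord n → Prop
  | one (α β γ : CLetter n) (h : ¬ ColGE α.1 β.1)
      (hP : SingleColP n (α.1 ++ β.1) γ.1) :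
      TRule n [α, β] [γ]
  | two (α β γ δ : CLetter n) (h : ¬ ColGE α.1 β.1)
      (hP : TwoColP n (α.1 ++ β.1) γ.1 δ.1) :
      TRule n [α, β] [γ, δ]

/-- One step of rewriting using a rule of `T`, in context. -/
def TStep (n : ℕ) (u v : CWord n) : Prop :=
  ∃ p q l r, TRule n l r ∧ u = p ++ l ++ q ∧ v = p ++ r ++ q


/-- `w` has a nondecreasing subsequence of length `k`. -/
def NDS (n : ℕ) (w : Word n) (k : ℕ) : Prop :=
  ∃ s : Word n, s.Sublist w ∧ s.Chain' (· ≤ ·) ∧ s.length = k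

lemma sublist_triple {γ : Type*} {s : List γ} {a b c : γ} (h : s.Sublist [a,b,c]) :
    s = [] ∨ s = [a] ∨ s = [b] ∨ s = [c] ∨ s = [a,b] ∨ s = [a,c] ∨ s = [b,c] ∨ s = [a,b,c] := by
  simp only [List.sublist_cons_iff, List.sublist_nil] at h
  aesop

lemma chain_pair_iff {n : ℕ} (s1 s4 : Word n) (p q : Fin n) :
    (s1 ++ ([p, q] ++ s4)).Chain' (· ≤ ·) ↔
      s1.Chain' (· ≤ ·) ∧ s4.Chain' (· ≤ ·) ∧ p ≤ q ∧
      (∀ a ∈ s1.getLast?, a ≤ p) ∧ (∀ b ∈ s4.head?, q ≤ b) := by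
  simp [List.Chain', List.isChain_append, List.isChain_cons]
  tauto

lemma nds_transfer {n : ℕ} (u v m m' : Word n)
    (H : ∀ s1 s3 s4 : Word n, s3.Sublist m → (s1 ++ (s3 ++ s4)).Chain' (· ≤ ·) →
      ∃ s3', s3'.Sublist m' ∧ s3'.length = s3.length ∧ (s1 ++ (s3' ++ s4)).Chain' (· ≤ ·))
    {k : ℕ} (h : NDS n (u ++ m ++ v) k) : NDS n (u ++ m' ++ v) k := by
  obtain ⟨s, hsub, hch, hlen⟩ := h
  rw [List.append_assoc, List.sublist_append_iff] at hsub
  obtain ⟨s1, s', rfl, hs1, hs'⟩ := hsub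
  rw [List.sublist_append_iff] at hs'
  obtain ⟨s3, s4, rfl, hs3, hs4⟩ := hs'
  obtain ⟨s3', hs3', hlen', hch'⟩ := H s1 s3 s4 hs3 hch
  refine ⟨s1 ++ (s3' ++ s4), ?_, hch', by simpa [hlen'] using hlen⟩
  rw [List.append_assoc]
  exact hs1.append (hs3'.append hs4)

lemma mid_chain {n : ℕ} {s1 s4 m : Word n} (h : (s1 ++ (m ++ s4)).Chain' (· ≤ ·)) :
    m.Chain' (· ≤ ·) :=
  h.sublist ((List.sublist_append_left m s4).trans (List.sublist_append_right s1 _))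

lemma H1 {n : ℕ} (x y z : Fin n) (h1 : x ≤ y) (h2 : y < z) :
    ∀ s1 s3 s4 : Word n, s3.Sublist [x,z,y] → (s1 ++ (s3 ++ s4)).Chain' (· ≤ ·) →
      ∃ s3', s3'.Sublist [z,x,y] ∧ s3'.length = s3.length ∧
        (s1 ++ (s3' ++ s4)).Chain' (· ≤ ·) := by
  intro s1 s3 s4 hs3 hch
  rcases sublist_triple hs3 with rfl|rfl|rfl|rfl|rfl|rfl|rfl|rfl
  · exact ⟨[], by simp, rfl, hch⟩
  · exact ⟨[x], by simp, rfl, hch⟩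
  · exact ⟨[z], by simp, rfl, hch⟩
  · exact ⟨[y], by simp, rfl, hch⟩
  · -- [x,z] ↦ [x,y]
    obtain ⟨hc1, hc4, -, hl, hr⟩ := (chain_pair_iff s1 s4 x z).mp hch
    refine ⟨[x,y], List.Sublist.cons z (List.Sublist.refl _), rfl, ?_⟩
    exact (chain_pair_iff s1 s4 x y).mpr
      ⟨hc1, hc4, h1, hl, fun b hb => le_of_lt (lt_of_lt_of_le h2 (hr b hb))⟩
  · exact ⟨[x,y], List.Sublist.cons z (List.Sublist.refl _), rfl, hch⟩
  · obtain ⟨-, -, hzy, -, -⟩ := (chain_pair_iff s1 s4 z y).mp hch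
    exact absurd hzy (not_le.mpr h2)
  · have := mid_chain hch
    simp [List.Chain', List.isChain_cons] at this
    exact absurd this.2 (not_le.mpr h2)

lemma H1' {n : ℕ} (x y z : Fin n) (h1 : x ≤ y) (h2 : y < z) :
    ∀ s1 s3 s4 : Word n, s3.Sublist [z,x,y] → (s1 ++ (s3 ++ s4)).Chain' (· ≤ ·) →
      ∃ s3', s3'.Sublist [x,z,y] ∧ s3'.length = s3.length ∧
        (s1 ++ (s3' ++ s4)).Chain' (· ≤ ·) := by
  intro s1 s3 s4 hs3 hch
  rcases sublist_triple hs3 with rfl|rfl|rfl|rfl|rfl|rfl|rfl|rfl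
  · exact ⟨[], by simp, rfl, hch⟩
  · exact ⟨[z], by simp, rfl, hch⟩
  · exact ⟨[x], by simp, rfl, hch⟩
  · exact ⟨[y], by simp, rfl, hch⟩
  · -- [z,x] : impossible
    obtain ⟨-, -, hzx, -, -⟩ := (chain_pair_iff s1 s4 z x).mp hch
    exact absurd hzx (not_le.mpr (lt_of_le_of_lt h1 h2))
  · -- [z,y] : impossible
    obtain ⟨-, -, hzy, -, -⟩ := (chain_pair_iff s1 s4 z y).mp hch
    exact absurd hzy (not_le.mpr h2)
  · -- [x,y] stays, sublist of [x,z,y]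
    exact ⟨[x,y], (List.Sublist.refl [y]).cons z |>.cons₂ x, rfl, hch⟩
  · have := mid_chain hch
    simp [List.Chain', List.isChain_cons] at this
    exact absurd this.1 (not_le.mpr (lt_of_le_of_lt h1 h2))

lemma H2 {n : ℕ} (x y z : Fin n) (h1 : x < y) (h2 : y ≤ z) :
    ∀ s1 s3 s4 : Word n, s3.Sublist [y,x,z] → (s1 ++ (s3 ++ s4)).Chain' (· ≤ ·) →
      ∃ s3', s3'.Sublist [y,z,x] ∧ s3'.length = s3.length ∧
        (s1 ++ (s3' ++ s4)).Chain' (· ≤ ·) := by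
  intro s1 s3 s4 hs3 hch
  rcases sublist_triple hs3 with rfl|rfl|rfl|rfl|rfl|rfl|rfl|rfl
  · exact ⟨[], by simp, rfl, hch⟩
  · exact ⟨[y], by simp, rfl, hch⟩
  · exact ⟨[x], by simp, rfl, hch⟩
  · exact ⟨[z], by simp, rfl, hch⟩
  · -- [y,x] : impossible
    obtain ⟨-, -, hyx, -, -⟩ := (chain_pair_iff s1 s4 y x).mp hch
    exact absurd hyx (not_le.mpr h1)
  · -- [y,z] stays
    exact ⟨[y,z], (List.nil_sublist [x]).cons₂ z |>.cons₂ y, rfl, hch⟩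
  · -- [x,z] ↦ [y,z]
    obtain ⟨hc1, hc4, -, hl, hr⟩ := (chain_pair_iff s1 s4 x z).mp hch
    refine ⟨[y,z], ?_, rfl, ?_⟩
    · exact ((List.nil_sublist [x]).cons₂ z).cons₂ y
    · exact (chain_pair_iff s1 s4 y z).mpr
        ⟨hc1, hc4, h2, fun a ha => le_of_lt (lt_of_le_of_lt (hl a ha) h1), hr⟩
  · have := mid_chain hch
    simp [List.Chain', List.isChain_cons] at this
    exact absurd this.1 (not_le.mpr h1)

lemma H2' {n : ℕ} (x y z : Fin n) (h1 : x < y) (h2 : y ≤ z) :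
    ∀ s1 s3 s4 : Word n, s3.Sublist [y,z,x] → (s1 ++ (s3 ++ s4)).Chain' (· ≤ ·) →
      ∃ s3', s3'.Sublist [y,x,z] ∧ s3'.length = s3.length ∧
        (s1 ++ (s3' ++ s4)).Chain' (· ≤ ·) := by
  intro s1 s3 s4 hs3 hch
  rcases sublist_triple hs3 with rfl|rfl|rfl|rfl|rfl|rfl|rfl|rfl
  · exact ⟨[], by simp, rfl, hch⟩
  · exact ⟨[y], by simp, rfl, hch⟩
  · exact ⟨[z], by simp, rfl, hch⟩
  · exact ⟨[x], by simp, rfl, hch⟩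
  · -- [y,z] stays, sublist of [y,x,z]
    exact ⟨[y,z], ((List.Sublist.refl [z]).cons x).cons₂ y, rfl, hch⟩
  · -- [y,x] : impossible
    obtain ⟨-, -, hyx, -, -⟩ := (chain_pair_iff s1 s4 y x).mp hch
    exact absurd hyx (not_le.mpr h1)
  · -- [z,x] : impossible
    obtain ⟨-, -, hzx, -, -⟩ := (chain_pair_iff s1 s4 z x).mp hch
    exact absurd hzx (not_le.mpr (lt_of_lt_of_le h1 h2))
  · have := mid_chain hch
    simp [List.Chain', List.isChain_cons] at this
    exact absurd this.2 (not_le.mpr (lt_of_lt_of_le h1 h2))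


lemma knuthStep_nds {n : ℕ} {u v : Word n} (h : KnuthStep n u v) (k : ℕ) :
    NDS n u k ↔ NDS n v k := by
  cases h with
  | left u v x y z h1 h2 =>
      exact ⟨nds_transfer u v _ _ (H1 x y z h1 h2), nds_transfer u v _ _ (H1' x y z h1 h2)⟩
  | right u v x y z h1 h2 =>
      exact ⟨nds_transfer u v _ _ (H2 x y z h1 h2), nds_transfer u v _ _ (H2' x y z h1 h2)⟩

lemma placticEq_nds {n : ℕ} {u v : Word n} (h : PlacticEq n u v) (k : ℕ) :
    NDS n u k ↔ NDS n v k := by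
  induction h with
  | rel a b hab => exact knuthStep_nds hab k
  | refl a => exact Iff.rfl
  | symm a b _ ih => exact ih.symm
  | trans a b c _ _ ih1 ih2 => exact ih1.trans ih2

lemma col_nds_le_one {n : ℕ} {w s : Word n} (hw : w.Chain' (fun a b => b < a))
    (hs : s.Sublist w) (hch : s.Chain' (· ≤ ·)) : s.length ≤ 1 := by
  have ht : IsTrans (Fin n) (fun a b => b < a) := ⟨fun a b c h h' => h'.trans h⟩
  have hd := hw.sublist hs
  match s, hch, hd with
  | [], _, _ => simp
  | [a], _, _ => simp
  | a :: b :: t, hch, hd =>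
      simp only [List.Chain'] at hch
      rw [List.isChain_cons_cons] at hch hd
      exact absurd hch.1 (not_le.mpr hd.1)

lemma nds_two_col {n : ℕ} {α β : Word n} (hα : α.Chain' (fun a b => b < a))
    (hβ : β.Chain' (fun a b => b < a)) {k : ℕ} (h : NDS n (α ++ β) k) : k ≤ 2 := by
  obtain ⟨s, hsub, hch, rfl⟩ := h
  rw [List.sublist_append_iff] at hsub
  obtain ⟨s1, s2, rfl, h1, h2⟩ := hsub
  have c1 : s1.Chain' (· ≤ ·) := hch.sublist (List.sublist_append_left _ _)
  have c2 : s2.Chain' (· ≤ ·) := hch.sublist (List.sublist_append_right s1 s2)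
  have b1 := col_nds_le_one hα h1 c1
  have b2 := col_nds_le_one hβ h2 c2
  rw [List.length_append]
  omega

/-- Let `α` and `β` be columns over `A` with `α ⋡ β`.  Then
the tableau `P(αβ)` contains at most two columns.  (Here `P(αβ)` is presented
by its list of rows `rs`, from top to bottom: it is a tableau whose word
`rs.flatten` represents the same element of `M_n` as `αβ`; its number of
columns is the length of its longest row, i.e. of its last (bottom) row.) -/
theorem statement0 {n : ℕ} (α β : Word n) (hα : IsColumn α) (hβ : IsColumn β)
    (hnge : ¬ ColGE α β) (rs : List (Word n)) (hrs : IsTableauRows rs)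
    (heq : PlacticEq n rs.flatten (α ++ β)) :
    (rs.getLastD []).length ≤ 2 := by
  rcases eq_or_ne rs [] with rfl | hne
  · simp
  · have hmem : rs.getLast hne ∈ rs := List.getLast_mem hne
    have hrow : (rs.getLast hne).Chain' (· ≤ ·) := (hrs.1 _ hmem).2
    have hsub : (rs.getLast hne).Sublist rs.flatten := List.sublist_flatten_of_mem hmem
    have h1 : NDS n rs.flatten (rs.getLast hne).length := ⟨_, hsub, hrow, rfl⟩
    have h2 : NDS n (α ++ β) (rs.getLast hne).length := (placticEq_nds heq _).mp h1
    have h3 := nds_two_col hα.2 hβ.2 h2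
    have hgd : rs.getLastD [] = rs.getLast hne := by
      rw [List.getLastD_eq_getLast?, List.getLast?_eq_getLast hne]
      rfl
    rw [hgd]
    exact h3
end

section
/- Let α and β be columns over A with α ⋡ β, and suppose that the tableau P(αβ) contains exactly two columns. Then the left column of P(αβ) contains strictly more symbols than α. -/
namespace S1Aux

variable {n : ℕ}

/-- A strictly decreasing word. -/
def Dec (l : Word n) : Prop := l.IsChain (fun a b => b < a)

lemma Dec.sublist {l l' : Word n} (h : Dec l) (hs : l'.Sublist l) : Dec l' :=
  List.IsChain.sublist h hs

lemma sublist_three {a b c : Fin n} {l : Word n} (h : l.Sublist [a,b,c]) :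
    l = [] ∨ l=[a] ∨ l=[b] ∨ l=[a,b] ∨ l=[c] ∨ l=[a,c] ∨ l=[b,c] ∨ l=[a,b,c] := by
  have := List.mem_sublists.2 h
  simp [List.sublists] at this
  tauto

/-- Replacing the middle factor by one admitting matching decreasing
subsequences. -/
lemma transfer {m m' : Word n}
    (H : ∀ l₂ : Word n, l₂.Sublist m → Dec l₂ →
      ∃ l₂', l₂'.Sublist m' ∧ Dec l₂' ∧ l₂'.length = l₂.length ∧
        (∀ a a', l₂.head? = some a → l₂'.head? = some a' → a' ≤ a) ∧
        (∀ a a', l₂.getLast? = some a → l₂'.getLast? = some a' → a ≤ a'))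
    (u v l : Word n) (hl : l.Sublist (u ++ m ++ v)) (hd : Dec l) :
    ∃ l', l'.Sublist (u ++ m' ++ v) ∧ Dec l' ∧ l'.length = l.length := by
  rw [List.sublist_append_iff] at hl
  obtain ⟨l₁₂, l₃, rfl, h12, h3⟩ := hl
  rw [List.sublist_append_iff] at h12
  obtain ⟨l₁, l₂, rfl, h1, h2⟩ := h12
  have hsub2 : l₂.Sublist ((l₁ ++ l₂) ++ l₃) :=
    ((List.sublist_append_right l₁ l₂).trans (List.sublist_append_left _ _))
  obtain ⟨l₂', hs', hd', hlen, hhead, hlast⟩ := H l₂ h2 (hd.sublist hsub2)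
  by_cases h0 : l₂ = []
  · subst h0
    have h0' : l₂' = [] := List.length_eq_zero_iff.mp (by simp [hlen])
    subst h0'
    exact ⟨l₁ ++ [] ++ l₃, List.Sublist.append (List.Sublist.append h1 hs') h3, hd, rfl⟩
  · have hne' : l₂' ≠ [] := by
      intro h; apply h0; apply List.length_eq_zero_iff.mp; rw [← hlen, h]; rfl
    refine ⟨l₁ ++ l₂' ++ l₃, List.Sublist.append (List.Sublist.append h1 hs') h3, ?_,
      by simp [hlen]⟩
    obtain ⟨a, ha⟩ : ∃ a, l₂.head? = some a := by
      cases l₂ with | nil => exact absurd rfl h0 | cons x t => exact ⟨x, rfl⟩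
    obtain ⟨a', ha'⟩ : ∃ a', l₂'.head? = some a' := by
      cases l₂' with | nil => exact absurd rfl hne' | cons x t => exact ⟨x, rfl⟩
    obtain ⟨b, hb⟩ : ∃ b, l₂.getLast? = some b :=
      Option.isSome_iff_exists.mp (List.getLast?_isSome.mpr h0)
    obtain ⟨b', hb'⟩ : ∃ b', l₂'.getLast? = some b' :=
      Option.isSome_iff_exists.mp (List.getLast?_isSome.mpr hne')
    rw [Dec, List.isChain_append, List.isChain_append] at hd ⊢
    obtain ⟨⟨hc1, hc2, hj12⟩, hc3, hj23⟩ := hd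
    refine ⟨⟨hc1, hd', ?_⟩, hc3, ?_⟩
    · intro x hx y hy
      rw [Option.mem_def, ha'] at hy
      have hy' : y = a' := (Option.some_inj.mp hy).symm
      rw [hy']
      exact lt_of_le_of_lt (hhead a a' ha ha') (hj12 x hx a (Option.mem_def.mpr ha))
    · intro x hx y hy
      rw [Option.mem_def, List.getLast?_append_of_ne_nil _ hne', hb'] at hx
      have hx' : x = b' := (Option.some_inj.mp hx).symm
      rw [hx']
      exact lt_of_lt_of_le
        (hj23 b (by rw [Option.mem_def, List.getLast?_append_of_ne_nil _ h0]; exact hb) y hy)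
        (hlast b b' hb hb')

lemma knuth_forward {u v : Word n} (h : KnuthStep n u v) :
    ∀ l, l.Sublist u → Dec l → ∃ l', l'.Sublist v ∧ Dec l' ∧ l'.length = l.length := by
  cases h with
  | left u v x y z h1 h2 =>
    intro l hl hd
    refine transfer ?_ u v l hl hd
    intro l₂ hs hdec
    have hxz : x < z := lt_of_le_of_lt h1 h2
    rcases sublist_three hs with rfl|rfl|rfl|rfl|rfl|rfl|rfl|rfl
    · exact ⟨[], by simp, by simp [Dec], rfl, by simp, by simp⟩
    · exact ⟨[x], by simp [List.Sublist], by simp [Dec], rfl,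
        by simp_all, by simp_all⟩
    · exact ⟨[z], by simp [List.Sublist], by simp [Dec], rfl, by simp_all, by simp_all⟩
    · simp [Dec] at hdec; exact absurd hdec (not_lt.2 hxz.le)
    · exact ⟨[y], by simp [List.Sublist], by simp [Dec], rfl, by simp_all, by simp_all⟩
    · simp [Dec] at hdec; exact absurd hdec (not_lt.2 h1)
    · exact ⟨[z,y], by simp [List.Sublist], by simp [Dec, h2], rfl,
        by simp_all, by simp_all⟩
    · simp [Dec] at hdec; exact absurd hdec.1 (not_lt.2 hxz.le)
  | right u v x y z h1 h2 =>
    intro l hl hd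
    refine transfer ?_ u v l hl hd
    intro l₂ hs hdec
    have hxz : x < z := lt_of_lt_of_le h1 h2
    rcases sublist_three hs with rfl|rfl|rfl|rfl|rfl|rfl|rfl|rfl
    · exact ⟨[], by simp, by simp [Dec], rfl, by simp, by simp⟩
    · exact ⟨[y], by simp [List.Sublist], by simp [Dec], rfl, by simp_all, by simp_all⟩
    · exact ⟨[x], by simp [List.Sublist], by simp [Dec], rfl, by simp_all, by simp_all⟩
    · exact ⟨[y,x], by simp [List.Sublist], by simp [Dec, h1], rfl,
        by simp_all, by simp_all⟩
    · exact ⟨[z], by simp [List.Sublist], by simp [Dec], rfl, by simp_all, by simp_all⟩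
    · simp [Dec] at hdec; exact absurd hdec (not_lt.2 h2)
    · simp [Dec] at hdec; exact absurd hdec (not_lt.2 hxz.le)
    · simp [Dec] at hdec; exact absurd hdec.2 (not_lt.2 hxz.le)

lemma knuth_backward {u v : Word n} (h : KnuthStep n u v) :
    ∀ l, l.Sublist v → Dec l → ∃ l', l'.Sublist u ∧ Dec l' ∧ l'.length = l.length := by
  cases h with
  | left u v x y z h1 h2 =>
    intro l hl hd
    refine transfer ?_ u v l hl hd
    intro l₂ hs hdec
    have hxz : x < z := lt_of_le_of_lt h1 h2
    rcases sublist_three hs with rfl|rfl|rfl|rfl|rfl|rfl|rfl|rfl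
    · exact ⟨[], by simp, by simp [Dec], rfl, by simp, by simp⟩
    · exact ⟨[z], by simp [List.Sublist], by simp [Dec], rfl, by simp_all, by simp_all⟩
    · exact ⟨[x], by simp [List.Sublist], by simp [Dec], rfl, by simp_all, by simp_all⟩
    · -- [z,x] → [z,y]
      refine ⟨[z,y], by simp [List.Sublist], by simp [Dec, h2], rfl, ?_, ?_⟩
      · intro p q hp hq; simp_all
      · intro p q hp hq; simp_all
    · exact ⟨[y], by simp [List.Sublist], by simp [Dec], rfl, by simp_all, by simp_all⟩
    · exact ⟨[z,y], by simp [List.Sublist], by simp [Dec, h2], rfl,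
        by simp_all, by simp_all⟩
    · simp [Dec] at hdec; exact absurd hdec (not_lt.2 h1)
    · simp [Dec] at hdec; exact absurd hdec.2 (not_lt.2 h1)
  | right u v x y z h1 h2 =>
    intro l hl hd
    refine transfer ?_ u v l hl hd
    intro l₂ hs hdec
    have hxz : x < z := lt_of_lt_of_le h1 h2
    rcases sublist_three hs with rfl|rfl|rfl|rfl|rfl|rfl|rfl|rfl
    · exact ⟨[], by simp, by simp [Dec], rfl, by simp, by simp⟩
    · exact ⟨[y], by simp [List.Sublist], by simp [Dec], rfl, by simp_all, by simp_all⟩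
    · exact ⟨[z], by simp [List.Sublist], by simp [Dec], rfl, by simp_all, by simp_all⟩
    · simp [Dec] at hdec; exact absurd hdec (not_lt.2 h2)
    · exact ⟨[x], by simp [List.Sublist], by simp [Dec], rfl, by simp_all, by simp_all⟩
    · -- [y,x] → [y,x]
      exact ⟨[y,x], by simp [List.Sublist], by simp [Dec, h1], rfl,
        by simp_all, by simp_all⟩
    · -- [z,x] → [y,x]
      refine ⟨[y,x], by simp [List.Sublist], by simp [Dec, h1], rfl, ?_, ?_⟩
      · intro p q hp hq; simp_all
      · intro p q hp hq; simp_all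
    · simp [Dec] at hdec; exact absurd hdec.1 (not_lt.2 h2)

lemma plactic_transfer {u v : Word n} (h : PlacticEq n u v) :
    (∀ l, l.Sublist u → Dec l → ∃ l', l'.Sublist v ∧ Dec l' ∧ l'.length = l.length)
  ∧ (∀ l, l.Sublist v → Dec l → ∃ l', l'.Sublist u ∧ Dec l' ∧ l'.length = l.length) := by
  induction h with
  | rel a b h => exact ⟨knuth_forward h, knuth_backward h⟩
  | refl a => exact ⟨fun l hs hd => ⟨l, hs, hd, rfl⟩, fun l hs hd => ⟨l, hs, hd, rfl⟩⟩
  | symm a b h ih => exact ⟨ih.2, ih.1⟩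
  | trans a b c h1 h2 ih1 ih2 =>
    constructor
    · intro l hs hd
      obtain ⟨l', g1, g2, g3⟩ := ih1.1 l hs hd
      obtain ⟨l'', f1, f2, f3⟩ := ih2.1 l' g1 g2
      exact ⟨l'', f1, f2, f3.trans g3⟩
    · intro l hs hd
      obtain ⟨l', g1, g2, g3⟩ := ih2.2 l hs hd
      obtain ⟨l'', f1, f2, f3⟩ := ih1.2 l' g1 g2
      exact ⟨l'', f1, f2, f3.trans g3⟩

lemma rows_bound (rs : List (Word n)) (hrow : ∀ r ∈ rs, IsRow r) :
    ∀ l : Word n, l.Sublist rs.flatten → Dec l → l.length ≤ rs.length := by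
  induction rs with
  | nil => intro l hl _; simp only [List.flatten_nil, List.sublist_nil] at hl; simp [hl]
  | cons r rs ih =>
    intro l hl hd
    rw [List.flatten_cons, List.sublist_append_iff] at hl
    obtain ⟨l₁, l₂, rfl, h1, h2⟩ := hl
    have hd1 : Dec l₁ := hd.sublist (List.sublist_append_left _ _)
    have hd2 : Dec l₂ := hd.sublist (List.sublist_append_right _ _)
    have hle : l₁.length ≤ 1 := by
      match l₁, hd1, h1 with
      | [], _, _ => simp
      | [a], _, _ => simp
      | a :: b :: t, hd1, h1 =>
        exfalso
        have hab : b < a := (List.isChain_cons_cons.mp hd1).1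
        have : List.Chain' (fun p q : Fin n => p ≤ q) (a :: b :: t) :=
          List.IsChain.sublist (hrow r (by simp)) h1
        exact absurd (List.isChain_cons_cons.mp this).1 (not_le.2 hab)
    have := ih (fun r hr => hrow r (by simp [hr])) l₂ h2 hd2
    simp only [List.length_append, List.length_cons]
    omega

lemma exists_dec (α β : Word n) (hβ : IsColumn β) (hα : IsColumn α)
    (hnge : ¬ ColGE α β) :
    ∃ l : Word n, l.Sublist (α ++ β) ∧ Dec l ∧ α.length < l.length := by
  by_cases hlen : β.length ≤ α.length
  · have hex : ¬ ∀ (i : ℕ) (a b : Fin n),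
        α.reverse[i]? = some a → β.reverse[i]? = some b → a ≤ b := by
      intro h; exact hnge ⟨hlen, h⟩
    push_neg at hex
    obtain ⟨i, a, b, hA, hB, hab⟩ := hex
    have hiα : i < α.length := by
      by_contra h
      push_neg at h
      rw [List.getElem?_eq_none (by simpa using h)] at hA
      cases hA
    have hiβ : i < β.length := by
      by_contra h
      push_neg at h
      rw [List.getElem?_eq_none (by simpa using h)] at hB
      cases hB
    rw [List.getElem?_reverse (by simpa using hiα)] at hA
    rw [List.getElem?_reverse (by simpa using hiβ)] at hB
    set j := α.length - 1 - i with hj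
    set m := β.length - 1 - i with hm
    refine ⟨α.take (j+1) ++ β.drop m, List.Sublist.append
      (List.take_sublist _ _) (List.drop_sublist _ _), ?_, ?_⟩
    · rw [Dec, List.isChain_append]
      refine ⟨hα.2.sublist (List.take_sublist _ _),
        hβ.2.sublist (List.drop_sublist _ _), ?_⟩
      intro x hx y hy
      have hxval : (α.take (j+1)).getLast? = some a := by
        rw [List.getLast?_eq_getElem?]
        have hlt : j < α.length := by omega
        rw [List.length_take, Nat.min_eq_left (by omega)]
        simpa [List.getElem?_take, Nat.lt_succ_self] using hA
      have hyval : (β.drop m).head? = some b := by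
        rw [List.head?_drop]; exact hB
      rw [hxval] at hx
      rw [hyval] at hy
      simp only [Option.mem_def, Option.some.injEq] at hx hy
      subst hx; subst hy
      exact hab
    · rw [List.length_append, List.length_take, List.length_drop,
        Nat.min_eq_left (by omega)]
      omega
  · exact ⟨β, List.sublist_append_right _ _, hβ.2, by omega⟩

lemma filterMap_head_len (rs : List (Word n)) (h : ∀ r ∈ rs, r ≠ []) :
    (rs.filterMap List.head?).length = rs.length := by
  induction rs with
  | nil => simp
  | cons r rs ih =>
    rcases r with _ | ⟨a, t⟩
    · exact absurd rfl (h _ (by simp))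
    · simp [ih (fun r hr => h r (by simp [hr]))]

end S1Aux

/-- Let `α` and `β` be columns over `A` with `α ⋡ β`, and
suppose the tableau `P(αβ)` contains exactly two columns.  Then the left
column of `P(αβ)` contains strictly more symbols than `α`.  (Here `P(αβ)` is
presented by its list of rows `rs`, from top to bottom: it is a tableau whose
word `rs.flatten` represents the same element of `M_n` as `αβ`; its number of
columns is the length of its last (bottom, longest) row, and its left column
consists of the first letters of its rows, read from top to bottom.) -/
theorem statement1 {n : ℕ} (α β : Word n) (hα : IsColumn α) (hβ : IsColumn β)
    (hnge : ¬ ColGE α β) (rs : List (Word n)) (hrs : IsTableauRows rs)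
    (heq : PlacticEq n rs.flatten (α ++ β))
    (htwo : (rs.getLastD []).length = 2) :
    α.length < (rs.filterMap List.head?).length := by
  obtain ⟨l, hls, hld, hlen⟩ := S1Aux.exists_dec α β hβ hα hnge
  obtain ⟨l', hs', hd', hlen'⟩ := (S1Aux.plactic_transfer heq).2 l hls hld
  have hbound := S1Aux.rows_bound rs (fun r hr => (hrs.1 r hr).2) l' hs' hd'
  have hfm := S1Aux.filterMap_head_len rs (fun r hr => (hrs.1 r hr).1)
  omega
end

section
/- The rewriting system (C, T) is noetherian: there is no infinite sequence w_1 → w_2 → w_3 → ⋯ of words in C* in which each w_{i+1} is obtained from w_i by a single application of a rule of T. -/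
namespace Noeth
variable {n : ℕ}

instance : IsTrans (Fin n) (fun a b => b < a) := ⟨fun _ _ _ h1 h2 => lt_trans h2 h1⟩

def DecSub (w : Word n) (k : ℕ) : Prop :=
  ∃ s : Word n, s.Sublist w ∧ s.Chain' (fun a b => b < a) ∧ s.length = k

lemma decsub_mono {w : Word n} {k j : ℕ} (h : DecSub w k) (hj : j ≤ k) : DecSub w j := by
  obtain ⟨s, hs, hc, hl⟩ := h
  refine ⟨s.take j, (s.take_sublist j).trans hs, ?_, by simp [hl]; omega⟩
  unfold List.Chain' at hc ⊢; rw [List.isChain_iff_pairwise] at hc ⊢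
  exact hc.sublist (s.take_sublist j)

lemma sublist_triple {a b c : Fin n} {t : Word n} (h : t.Sublist [a,b,c]) :
    t = [] ∨ t = [a] ∨ t = [b] ∨ t = [c] ∨ t = [a,b] ∨ t = [a,c] ∨ t = [b,c] ∨ t = [a,b,c] := by
  have h2 : t ∈ List.sublists [a,b,c] := List.mem_sublists.2 h
  simp [List.sublists] at h2
  tauto

lemma decsub_rewrite {m m' : Word n} (u v : Word n) {k : ℕ}
    (H : ∀ t : Word n, t.Sublist m → t.Chain' (fun a b => b < a) →
      ∃ t' : Word n, t'.Sublist m' ∧ t'.Chain' (fun a b => b < a) ∧ t'.length = t.length ∧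
        (∀ a ∈ t'.head?, ∃ b ∈ t.head?, a ≤ b) ∧
        (∀ a ∈ t.getLast?, ∃ b ∈ t'.getLast?, a ≤ b))
    (hd : DecSub (u ++ m ++ v) k) : DecSub (u ++ m' ++ v) k := by
  obtain ⟨s, hs, hc, hl⟩ := hd
  rw [List.append_assoc] at hs
  obtain ⟨s1, s23, rfl, h1, h23⟩ := List.sublist_append_iff.1 hs
  obtain ⟨t, s2, rfl, ht, h2⟩ := List.sublist_append_iff.1 h23
  unfold List.Chain' at hc; rw [List.isChain_append] at hc
  obtain ⟨c1, c23, i12⟩ := hc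
  rw [List.isChain_append] at c23
  obtain ⟨ct, c2, i23⟩ := c23
  obtain ⟨t', ht', ct', hlen, hhead, hlast⟩ := H t ht ct
  have hlength : (s1 ++ (t' ++ s2)).length = k := by simp at hl ⊢; omega
  rcases eq_or_ne t' [] with rfl | hne
  · have htnil : t = [] := by simpa [List.length_eq_zero_iff] using hlen.symm
    subst htnil
    refine ⟨s1 ++ ([] ++ s2), ?_, ?_, hlength⟩
    · rw [List.append_assoc]; exact h1.append (ht'.append h2)
    · unfold List.Chain'; rw [List.isChain_append]
      exact ⟨c1, by simpa using c2, by simpa using i12⟩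
  · have htne : t ≠ [] := by
      intro h; subst h; simp [List.length_eq_zero_iff] at hlen; exact hne hlen
    refine ⟨s1 ++ (t' ++ s2), ?_, ?_, hlength⟩
    · rw [List.append_assoc]; exact h1.append (ht'.append h2)
    · unfold List.Chain'; rw [List.isChain_append]
      refine ⟨c1, ?_, ?_⟩
      · rw [List.isChain_append]
        refine ⟨ct', c2, ?_⟩
        intro x hx y hy
        have hgt : t.getLast? = some (t.getLast htne) := List.getLast?_eq_getLast htne
        obtain ⟨b, hb, hle⟩ := hlast (t.getLast htne) (by rw [hgt]; rfl)
        have hbx : b = x := Option.mem_unique hb hx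
        have := i23 (t.getLast htne) (by rw [hgt]; rfl) y hy
        exact lt_of_lt_of_le this (hbx ▸ hle)
      · intro x hx y hy
        rw [List.head?_append] at hy
        have hth : t'.head? = some (t'.head hne) := List.head?_eq_head hne
        have hy' : y = t'.head hne := by
          rw [hth] at hy; exact (by simpa using hy : t'.head hne = y).symm
        obtain ⟨b, hb, hle⟩ := hhead (t'.head hne) (by rw [hth]; rfl)
        have : b ∈ (t ++ s2).head? := by
          have hb' : t.head? = some b := hb
          show (t ++ s2).head? = some b
          rw [List.head?_append, hb']; rfl
        have := i12 x hx b this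
        exact lt_of_le_of_lt (hy' ▸ hle) this

/-- The conclusion type of the replacement hypothesis. -/
def Repl (t m' : Word n) : Prop :=
  ∃ t' : Word n, t'.Sublist m' ∧ t'.Chain' (fun a b => b < a) ∧ t'.length = t.length ∧
    (∀ a ∈ t'.head?, ∃ b ∈ t.head?, a ≤ b) ∧
    (∀ a ∈ t.getLast?, ∃ b ∈ t'.getLast?, a ≤ b)

lemma repl_refl {t m' : Word n} (hs : t.Sublist m') (hc : t.Chain' (fun a b => b < a)) :
    Repl t m' :=
  ⟨t, hs, hc, rfl, fun a ha => ⟨a, ha, le_rfl⟩, fun a ha => ⟨a, ha, le_rfl⟩⟩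

lemma H_left_fwd {x y z : Fin n} (h1 : x ≤ y) (h2 : y < z) :
    ∀ t : Word n, t.Sublist [x,z,y] → t.Chain' (fun a b => b < a) → Repl t [z,x,y] := by
  intro t ht hc
  rcases sublist_triple ht with rfl|rfl|rfl|rfl|rfl|rfl|rfl|rfl
  · exact repl_refl (by simp) hc
  · exact repl_refl (by simp) hc
  · exact repl_refl (by simp) hc
  · exact repl_refl (by simp) hc
  · simp [List.Chain', List.isChain_cons_cons] at hc; exact absurd hc (not_lt.2 (le_of_lt (lt_of_le_of_lt h1 h2)))
  · simp [List.Chain', List.isChain_cons_cons] at hc; exact absurd hc (not_lt.2 h1)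
  · exact repl_refl (by simp) hc
  · simp [List.Chain', List.isChain_cons_cons] at hc
    exact absurd hc.1 (not_lt.2 (le_of_lt (lt_of_le_of_lt h1 h2)))

lemma H_left_bwd {x y z : Fin n} (h1 : x ≤ y) (h2 : y < z) :
    ∀ t : Word n, t.Sublist [z,x,y] → t.Chain' (fun a b => b < a) → Repl t [x,z,y] := by
  intro t ht hc
  rcases sublist_triple ht with rfl|rfl|rfl|rfl|rfl|rfl|rfl|rfl
  · exact repl_refl (by simp) hc
  · exact repl_refl (by simp) hc
  · exact repl_refl (by simp) hc
  · exact repl_refl (by simp) hc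
  · -- t = [z,x] ↦ t' = [z,y]
    refine ⟨[z,y], by simp, by simp [List.Chain', List.isChain_cons_cons, h2], by simp, ?_, ?_⟩
    · intro a ha
      have : z = a := by simpa using ha
      exact ⟨z, rfl, this ▸ le_rfl⟩
    · intro a ha
      refine ⟨y, rfl, ?_⟩
      have : x = a := by simpa using ha
      exact this ▸ h1
  · exact repl_refl (by simp) hc
  · simp [List.Chain', List.isChain_cons_cons] at hc; exact absurd hc (not_lt.2 h1)
  · simp [List.Chain', List.isChain_cons_cons] at hc; exact absurd hc.2 (not_lt.2 h1)

lemma H_right_fwd {x y z : Fin n} (h1 : x < y) (h2 : y ≤ z) :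
    ∀ t : Word n, t.Sublist [y,x,z] → t.Chain' (fun a b => b < a) → Repl t [y,z,x] := by
  intro t ht hc
  rcases sublist_triple ht with rfl|rfl|rfl|rfl|rfl|rfl|rfl|rfl
  · exact repl_refl (by simp) hc
  · exact repl_refl (by simp) hc
  · exact repl_refl (by simp) hc
  · exact repl_refl (by simp) hc
  · exact repl_refl (by simp) hc
  · simp [List.Chain', List.isChain_cons_cons] at hc; exact absurd hc (not_lt.2 h2)
  · simp [List.Chain', List.isChain_cons_cons] at hc; exact absurd hc (not_lt.2 (le_of_lt (lt_of_lt_of_le h1 h2)))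
  · simp [List.Chain', List.isChain_cons_cons] at hc
    exact absurd hc.2 (not_lt.2 (le_of_lt (lt_of_lt_of_le h1 h2)))

lemma H_right_bwd {x y z : Fin n} (h1 : x < y) (h2 : y ≤ z) :
    ∀ t : Word n, t.Sublist [y,z,x] → t.Chain' (fun a b => b < a) → Repl t [y,x,z] := by
  intro t ht hc
  rcases sublist_triple ht with rfl|rfl|rfl|rfl|rfl|rfl|rfl|rfl
  · exact repl_refl (by simp) hc
  · exact repl_refl (by simp) hc
  · exact repl_refl (by simp) hc
  · exact repl_refl (by simp) hc
  · simp [List.Chain', List.isChain_cons_cons] at hc; exact absurd hc (not_lt.2 h2)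
  · exact repl_refl (by simp) hc
  · -- t = [z,x] ↦ t' = [y,x]
    refine ⟨[y,x], by simp, by simp [List.Chain', List.isChain_cons_cons, h1], by simp, ?_, ?_⟩
    · intro a ha
      have : y = a := by simpa using ha
      exact ⟨z, rfl, this ▸ h2⟩
    · intro a ha
      have : x = a := by simpa using ha
      exact ⟨x, rfl, this ▸ le_rfl⟩
  · simp [List.Chain', List.isChain_cons_cons] at hc; exact absurd hc.1 (not_lt.2 h2)

lemma knuth_decsub {u v : Word n} (h : KnuthStep n u v) (k : ℕ) : DecSub u k ↔ DecSub v k := by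
  cases h with
  | left u v x y z h1 h2 =>
    exact ⟨decsub_rewrite u v (H_left_fwd h1 h2), decsub_rewrite u v (H_left_bwd h1 h2)⟩
  | right u v x y z h1 h2 =>
    exact ⟨decsub_rewrite u v (H_right_fwd h1 h2), decsub_rewrite u v (H_right_bwd h1 h2)⟩

lemma plactic_decsub {u v : Word n} (h : PlacticEq n u v) (k : ℕ) : DecSub u k ↔ DecSub v k := by
  induction h with
  | rel _ _ h => exact knuth_decsub h k
  | refl => exact Iff.rfl
  | symm _ _ _ ih => exact ih.symm
  | trans _ _ _ _ _ ih1 ih2 => exact ih1.trans ih2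

lemma knuth_length {u v : Word n} (h : KnuthStep n u v) : u.length = v.length := by
  cases h <;> simp

lemma plactic_length {u v : Word n} (h : PlacticEq n u v) : u.length = v.length := by
  induction h with
  | rel _ _ h => exact knuth_length h
  | refl => rfl
  | symm _ _ _ ih => exact ih.symm
  | trans _ _ _ _ _ ih1 ih2 => exact ih1.trans ih2

lemma countP_le_of_pointwise (P : Fin n → Bool) :
    ∀ {l2 l1 : Word n}, l2.length ≤ l1.length →
      (∀ (i : ℕ) (a b : Fin n), l1[i]? = some a → l2[i]? = some b → (P b → P a)) →
      l2.countP P ≤ l1.countP P := by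
  intro l2
  induction l2 with
  | nil => intro l1 _ _; simp
  | cons b t2 ih =>
    intro l1 hlen hpt
    cases l1 with
    | nil => simp at hlen
    | cons a t1 =>
      have h0 := hpt 0 a b (by simp) (by simp)
      have hrest : t2.countP P ≤ t1.countP P := by
        refine ih (by simpa using hlen) ?_
        intro i x y hx hy
        exact hpt (i+1) x y (by simpa using hx) (by simpa using hy)
      by_cases hb : P b
      · have ha : P a := h0 hb
        simp [List.countP_cons, hb, ha]; omega
      · simp [List.countP_cons, hb]
        by_cases ha : P a <;> simp [ha] <;> omega

lemma countP_reverse (P : Fin n → Bool) (l : Word n) : l.reverse.countP P = l.countP P := by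
  simp [List.countP_eq_length_filter, List.filter_reverse]

/-- Lemma A: a decreasing sublist of a two-column tableau reading `γδ` with
`γ ⪰ δ` has length at most `|γ|`. -/
lemma colGE_decsub_le {γ δ : Word n} (hge : ColGE γ δ) {k : ℕ}
    (h : DecSub (γ ++ δ) k) : k ≤ γ.length := by
  obtain ⟨s, hs, hc, rfl⟩ := h
  obtain ⟨s1, s2, rfl, h1, h2⟩ := List.sublist_append_iff.1 hs
  rcases eq_or_ne s2 [] with rfl | hne2
  · simpa using h1.length_le
  rcases eq_or_ne s1 [] with rfl | hne1
  · simpa using h2.length_le.trans hge.1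
  have hp : (s1 ++ s2).Pairwise (fun a b => b < a) := List.isChain_iff_pairwise.mp hc
  rw [List.pairwise_append] at hp
  obtain ⟨p1, p2, hps⟩ := hp
  set p := s1.getLast hne1 with hpdef
  have hpmem : p ∈ s1 := List.getLast_mem hne1
  set P : Fin n → Bool := fun g => decide (g < p) with hPdef
  have count1 : s2.length ≤ δ.countP P := by
    have hall : s2.countP P = s2.length :=
      List.countP_eq_length.2 (fun a ha => decide_eq_true (hps p hpmem a ha))
    rw [← hall]; exact h2.countP_le (p := P)
  have count2 : δ.countP P ≤ γ.countP P := by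
    rw [← countP_reverse P δ, ← countP_reverse P γ]
    refine countP_le_of_pointwise P (by simpa using hge.1) ?_
    intro i a b hx hy hb
    have := hge.2 i a b hx hy
    exact decide_eq_true (lt_of_le_of_lt this (of_decide_eq_true hb))
  have count3 : s1.length + γ.countP P ≤ γ.length := by
    have hnot : ∀ x ∈ s1, ¬ x < p := by
      intro x hx
      have hds : s1.dropLast ++ [p] = s1 := List.dropLast_append_getLast hne1
      rw [← hds] at p1
      rw [List.pairwise_append] at p1
      rw [← hds] at hx
      rcases List.mem_append.1 hx with hx' | hx'
      · have := p1.2.2 x hx' p (by simp)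
        exact not_lt.2 (le_of_lt this)
      · have : x = p := by simpa using hx'
        exact this ▸ lt_irrefl p
    have hall : s1.countP (fun a => decide ¬(P a = true)) = s1.length :=
      List.countP_eq_length.2 (fun a ha => by
        simp [hPdef]
        exact le_of_not_gt (hnot a ha))
    have hmono : s1.countP (fun a => decide ¬(P a = true)) ≤
        γ.countP (fun a => decide ¬(P a = true)) :=
      h1.countP_le
    have hsplit : γ.length = γ.countP P + γ.countP (fun a => decide ¬(P a = true)) :=
      List.length_eq_countP_add_countP P (l := γ)
    omega
  have := count1.trans count2
  simp only [List.length_append]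
  omega

/-- Lemma B: if `α ⋡ β` (both strictly decreasing), then `αβ` has a strictly
decreasing sublist of length `|α| + 1`. -/
lemma not_colGE_decsub {α β : Word n}
    (hα : α.Chain' (fun a b => b < a)) (hβ : β.Chain' (fun a b => b < a))
    (h : ¬ ColGE α β) : DecSub (α ++ β) (α.length + 1) := by
  rw [ColGE, not_and_or] at h
  rcases h with h | h
  · -- |β| > |α| : take β itself
    push_neg at h
    refine decsub_mono ⟨β, ?_, hβ, rfl⟩ (by omega)
    exact List.sublist_append_right α β
  · push_neg at h
    obtain ⟨i, a, b, ha, hb, hba⟩ := h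
    have hik : i < α.length := by
      have := List.getElem?_eq_some_iff.1 ha
      simpa using this.1
    have hil : i < β.length := by
      have := List.getElem?_eq_some_iff.1 hb
      simpa using this.1
    have ha' : α[α.length - 1 - i]? = some a := by
      rw [← List.getElem?_reverse (by simpa using hik)]; exact ha
    have hb' : β[β.length - 1 - i]? = some b := by
      rw [← List.getElem?_reverse (by simpa using hil)]; exact hb
    refine ⟨α.take (α.length - i) ++ β.drop (β.length - (i+1)), ?_, ?_, ?_⟩
    · exact (List.take_sublist _ _).append (List.drop_sublist _ _)
    · unfold List.Chain'; rw [List.isChain_append]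
      refine ⟨?_, ?_, ?_⟩
      · unfold List.Chain' at hα; rw [List.isChain_iff_pairwise] at hα ⊢
        exact hα.sublist (List.take_sublist _ _)
      · unfold List.Chain' at hβ; rw [List.isChain_iff_pairwise] at hβ ⊢
        exact hβ.sublist (List.drop_sublist _ _)
      · intro x hx y hy
        have hxa : x = a := by
          have hgl : (α.take (α.length - i)).getLast? =
              (α.take (α.length - i))[(α.take (α.length - i)).length - 1]? :=
            List.getLast?_eq_getElem?
          have hlt : (α.take (α.length - i)).length = α.length - i := by
            simp
          have : (α.take (α.length - i)).getLast? = some a := by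
            rw [hgl, hlt, List.getElem?_take]
            rw [if_pos (by omega)]
            have : α.length - i - 1 = α.length - 1 - i := by omega
            rw [this]; exact ha'
          exact Option.mem_unique hx this
        have hyb : y = b := by
          have : (β.drop (β.length - (i+1))).head? = some b := by
            rw [List.head?_eq_getElem?, List.getElem?_drop]
            have : β.length - (i+1) + 0 = β.length - 1 - i := by omega
            rw [this]; exact hb'
          exact Option.mem_unique hy this
        rw [hxa, hyb]; exact hba
    · simp
      omega


def nuC : CWord n → ℕ
  | [] => 0
  | c :: t => c.1.length + 2 * nuC t

lemma nuC_append_lt (p : CWord n) {s s' : CWord n} (h : nuC s < nuC s') :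
    nuC (p ++ s) < nuC (p ++ s') := by
  induction p with
  | nil => simpa using h
  | cons c t ih => simp only [List.cons_append, nuC, List.append_eq]; omega

lemma tstep_lt {u v : CWord n} (h : TStep n u v) : nuC v < nuC u := by
  obtain ⟨p, q, l, r, hr, rfl, rfl⟩ := h
  rw [List.append_assoc, List.append_assoc]
  apply nuC_append_lt p
  cases hr with
  | one α β γ hne hP =>
    have hlen : (α.1 ++ β.1).length = γ.1.length := plactic_length hP.2
    have hb : 1 ≤ β.1.length := List.length_pos_iff.2 β.2.1
    simp only [List.length_append] at hlen
    simp only [List.cons_append, List.nil_append, nuC]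
    omega
  | two α β γ δ hne hP =>
    obtain ⟨hγ, hδ, hge, he⟩ := hP
    have hlen : α.1.length + β.1.length = γ.1.length + δ.1.length := by
      simpa using plactic_length he
    have hlt : α.1.length < γ.1.length := by
      have h1 : DecSub (α.1 ++ β.1) (α.1.length + 1) :=
        not_colGE_decsub α.2.2 β.2.2 hne
      have h2 : DecSub (γ.1 ++ δ.1) (α.1.length + 1) :=
        (plactic_decsub he _).mp h1
      have := colGE_decsub_le hge h2
      omega
    simp only [List.cons_append, List.nil_append, nuC]
    omega

end Noeth


/-- The rewriting system `(C, T)` is noetherian: there is no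
infinite sequence `w₁ → w₂ → w₃ → ⋯` of words in `C*` in which each `w_{i+1}`
is obtained from `w_i` by a single application of a rule of `T`. -/
theorem statement3 {n : ℕ} (f : ℕ → CWord n) :
    ¬ (∀ i : ℕ, TStep n (f i) (f (i + 1))) := by
  intro h
  have hd : ∀ i, Noeth.nuC (f (i + 1)) < Noeth.nuC (f i) := fun i => Noeth.tstep_lt (h i)
  have key : ∀ i, Noeth.nuC (f i) + i ≤ Noeth.nuC (f 0) := by
    intro i
    induction i with
    | zero => simp
    | succ k ih => have := hd k; omega
  have := key (Noeth.nuC (f 0) + 1)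
  omega
end

section
/- Let 𝕂 be a field and let F = {l − r : (l → r) ∈ T}, a finite subset of the free associative algebra 𝕂⟨C⟩ over the finite alphabet C. Then the Plactic algebra, i.e. the monoid algebra 𝕂[M_n], is isomorphic as a 𝕂-algebra to the quotient 𝕂⟨C⟩/⟨F⟩ of the free associative algebra by the two-sided ideal generated by F. -/
/-- The congruence on the free monoid `A*` generated by the Knuth relations. -/
def placticCon (n : ℕ) : Con (FreeMonoid (Fin n)) :=
  conGen (fun u v => KnuthStep n (FreeMonoid.toList u) (FreeMonoid.toList v))

/-- The Plactic monoid `M_n`, as the quotient of the free monoid `A*` by the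
congruence generated by the Knuth relations. -/
abbrev PlacticMonoid (n : ℕ) := (placticCon n).Quotient

/-- The monomial of the free associative algebra `𝕂⟨C⟩` corresponding to a
word over `C`. -/
noncomputable def colWordProd (𝕂 : Type) [Field 𝕂] {n : ℕ} (u : CWord n) :
    FreeAlgebra 𝕂 (CLetter n) :=
  (u.map (FreeAlgebra.ι 𝕂)).prod

/-- The subset `F = {l − r : (l → r) ∈ T}` of the free associative algebra
`𝕂⟨C⟩`. -/
def Fset (𝕂 : Type) [Field 𝕂] (n : ℕ) : Set (FreeAlgebra 𝕂 (CLetter n)) :=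
  {x | ∃ l r : CWord n, TRule n l r ∧ x = colWordProd 𝕂 l - colWordProd 𝕂 r}

namespace Statement8Aux

variable {n : ℕ}

/-! ### Finiteness -/

lemma column_length_le {w : Word n} (h : IsColumn w) : w.length ≤ n := by
  have hp : w.Pairwise (fun a b => b < a) := List.isChain_iff_pairwise.mp h.2
  have hnd : w.Nodup := hp.imp fun h => (ne_of_lt h).symm
  simpa using hnd.length_le_card

instance : Finite (CLetter n) := by
  have hfin : {l : List (Fin n) | l.length ≤ n}.Finite := List.finite_length_le _ n
  haveI := hfin.to_subtype
  refine Finite.of_injective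
    (fun c : CLetter n => (⟨c.1, column_length_le c.2⟩ : {l : List (Fin n) | l.length ≤ n}))
    fun a b hab => Subtype.ext ?_
  simpa [Subtype.ext_iff] using hab

lemma fset_finite (𝕂 : Type) [Field 𝕂] (n : ℕ) : (Fset 𝕂 n).Finite := by
  classical
  have hS : {l : CWord n | l.length ≤ 2}.Finite := List.finite_length_le _ 2
  refine Set.Finite.subset (Set.Finite.image
    (fun p : CWord n × CWord n => colWordProd 𝕂 p.1 - colWordProd 𝕂 p.2)
    (hS.prod hS)) ?_
  rintro x ⟨l, r, hrule, rfl⟩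
  refine ⟨(l, r), ⟨?_, ?_⟩, rfl⟩ <;> cases hrule <;> simp
/-! ### Columns and basic `TRule` instances -/

/-- The single-letter column. -/
def sing (a : Fin n) : CLetter n := ⟨[a], by simp [IsColumn, List.Chain', List.isChain_singleton]⟩

lemma isColumn_pair {a b : Fin n} (h : b < a) : IsColumn [a, b] :=
  ⟨by simp, by simp [List.Chain', List.isChain_cons_cons, h]⟩

lemma isColumn_tail {a : Fin n} {β : Word n} (h : IsColumn (a :: β)) (hβ : β ≠ []) :
    IsColumn β := ⟨hβ, h.2.tail⟩

lemma head_lt {a b : Fin n} {t : Word n} (h : IsColumn (a :: b :: t)) : b < a :=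
  (List.isChain_cons_cons.mp h.2).1

lemma not_colGE_sing {a : Fin n} {β : Word n} (h : IsColumn (a :: β)) (hβ : β ≠ []) :
    ¬ ColGE [a] β := by
  rintro ⟨hlen, hle⟩
  match β, hβ with
  | b :: t, _ =>
    match t with
    | _ :: _ => simp at hlen
    | [] =>
      have hba : b < a := head_lt h
      have : a ≤ b := hle 0 a b (by simp) (by simp)
      exact absurd this (not_le.mpr hba)

/-- Collecting a letter into the column below it. -/
lemma trule_cons {a : Fin n} {β : Word n} (h : IsColumn (a :: β)) (hβ : β ≠ []) :
    TRule n [sing a, ⟨β, isColumn_tail h hβ⟩] [⟨a :: β, h⟩] := by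
  refine TRule.one _ _ _ (not_colGE_sing h hβ) ⟨h, ?_⟩
  exact Relation.EqvGen.refl _

lemma not_colGE_one_two {x : Fin n} {β : Word n} (h : β.length = 2) : ¬ ColGE [x] β := by
  rintro ⟨hlen, -⟩
  simp [h] at hlen

/-- The `TRule` instance for the left Knuth relation: `c_x c_{zy} → c_{zx} c_y`
for `x ≤ y < z`. -/
lemma trule_left {x y z : Fin n} (h1 : x ≤ y) (h2 : y < z) :
    TRule n [sing x, ⟨[z, y], isColumn_pair h2⟩]
      [⟨[z, x], isColumn_pair (lt_of_le_of_lt h1 h2)⟩, sing y] := by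
  refine TRule.two _ _ _ _ (not_colGE_one_two rfl) ⟨isColumn_pair (lt_of_le_of_lt h1 h2),
    (sing y).2, ⟨by simp [sing], ?_⟩, ?_⟩
  · intro i a b ha hb
    match i with
    | 0 => simp [sing] at ha hb; subst_vars; exact h1
    | j + 1 => simp [sing] at hb
  · have := KnuthStep.left (n := n) [] [] x y z h1 h2
    simp only [List.nil_append, List.append_nil] at this
    exact Relation.EqvGen.rel _ _ this

/-- The `TRule` instance for the right Knuth relation: `c_y c_{zx} → c_{yx} c_z`
for `x < y ≤ z`. -/
lemma trule_right {x y z : Fin n} (h1 : x < y) (h2 : y ≤ z) :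
    TRule n [sing y, ⟨[z, x], isColumn_pair (lt_of_lt_of_le h1 h2)⟩]
      [⟨[y, x], isColumn_pair h1⟩, sing z] := by
  refine TRule.two _ _ _ _ (not_colGE_one_two rfl) ⟨isColumn_pair h1,
    (sing z).2, ⟨by simp [sing], ?_⟩, ?_⟩
  · intro i a b ha hb
    match i with
    | 0 => simp [sing] at ha hb; subst_vars; exact le_trans (le_of_lt h1) h2
    | j + 1 => simp [sing] at hb
  · have := KnuthStep.right (n := n) [] [] x y z h1 h2
    simp only [List.nil_append, List.append_nil] at this
    exact Relation.EqvGen.symm _ _ (Relation.EqvGen.rel _ _ this)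
/-! ### The quotient ring and the two algebra maps -/

section RingSide

variable (𝕂 : Type) [Field 𝕂] (n : ℕ)

/-- The quotient ring `𝕂⟨C⟩/⟨F⟩`. -/
abbrev QR := (TwoSidedIdeal.span (Fset 𝕂 n)).ringCon.Quotient

/-- The projection `𝕂⟨C⟩ → 𝕂⟨C⟩/⟨F⟩` as an algebra map. -/
noncomputable def piA : FreeAlgebra 𝕂 (CLetter n) →ₐ[𝕂] QR 𝕂 n :=
  { toRingHom := (TwoSidedIdeal.span (Fset 𝕂 n)).ringCon.mk'
    commutes' := fun _ => rfl }

lemma piA_surjective : Function.Surjective (piA 𝕂 n) :=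
  fun x => Quotient.inductionOn' x fun a => ⟨a, rfl⟩

lemma piA_rule {l r : CWord n} (h : TRule n l r) :
    piA 𝕂 n (colWordProd 𝕂 l) = piA 𝕂 n (colWordProd 𝕂 r) := by
  have hmem : colWordProd 𝕂 l - colWordProd 𝕂 r ∈ TwoSidedIdeal.span (Fset 𝕂 n) :=
    TwoSidedIdeal.subset_span ⟨l, r, h, rfl⟩
  exact Quotient.sound' ((TwoSidedIdeal.rel_iff _ _ _).mpr hmem)

/-- The image in the quotient of the generator corresponding to a single letter. -/
noncomputable def gl (a : Fin n) : QR 𝕂 n := piA 𝕂 n (FreeAlgebra.ι 𝕂 (sing a))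

lemma gl_mul_col {a : Fin n} {β : Word n} (h : IsColumn (a :: β)) (hβ : β ≠ []) :
    gl 𝕂 n a * piA 𝕂 n (FreeAlgebra.ι 𝕂 ⟨β, isColumn_tail h hβ⟩)
      = piA 𝕂 n (FreeAlgebra.ι 𝕂 ⟨a :: β, h⟩) := by
  have := piA_rule 𝕂 n (trule_cons h hβ)
  simpa [colWordProd, gl] using this

lemma ring_knuth_left {x y z : Fin n} (h1 : x ≤ y) (h2 : y < z) :
    gl 𝕂 n x * gl 𝕂 n z * gl 𝕂 n y = gl 𝕂 n z * gl 𝕂 n x * gl 𝕂 n y := by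
  have e1 : gl 𝕂 n z * gl 𝕂 n y = piA 𝕂 n (FreeAlgebra.ι 𝕂 ⟨[z, y], isColumn_pair h2⟩) :=
    gl_mul_col 𝕂 n (isColumn_pair h2) (by simp)
  have e3 : gl 𝕂 n z * gl 𝕂 n x
      = piA 𝕂 n (FreeAlgebra.ι 𝕂 ⟨[z, x], isColumn_pair (lt_of_le_of_lt h1 h2)⟩) :=
    gl_mul_col 𝕂 n (isColumn_pair (lt_of_le_of_lt h1 h2)) (by simp)
  have e2 : gl 𝕂 n x * piA 𝕂 n (FreeAlgebra.ι 𝕂 ⟨[z, y], isColumn_pair h2⟩)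
      = piA 𝕂 n (FreeAlgebra.ι 𝕂 ⟨[z, x], isColumn_pair (lt_of_le_of_lt h1 h2)⟩) * gl 𝕂 n y := by
    have := piA_rule 𝕂 n (trule_left h1 h2)
    simpa [colWordProd, gl] using this
  calc gl 𝕂 n x * gl 𝕂 n z * gl 𝕂 n y
      = gl 𝕂 n x * (gl 𝕂 n z * gl 𝕂 n y) := mul_assoc _ _ _
    _ = gl 𝕂 n x * piA 𝕂 n (FreeAlgebra.ι 𝕂 ⟨[z, y], isColumn_pair h2⟩) := by rw [e1]
    _ = piA 𝕂 n (FreeAlgebra.ι 𝕂 ⟨[z, x], isColumn_pair (lt_of_le_of_lt h1 h2)⟩) * gl 𝕂 n y := e2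
    _ = gl 𝕂 n z * gl 𝕂 n x * gl 𝕂 n y := by rw [e3]

lemma ring_knuth_right {x y z : Fin n} (h1 : x < y) (h2 : y ≤ z) :
    gl 𝕂 n y * gl 𝕂 n x * gl 𝕂 n z = gl 𝕂 n y * gl 𝕂 n z * gl 𝕂 n x := by
  have e1 : gl 𝕂 n y * gl 𝕂 n x = piA 𝕂 n (FreeAlgebra.ι 𝕂 ⟨[y, x], isColumn_pair h1⟩) :=
    gl_mul_col 𝕂 n (isColumn_pair h1) (by simp)
  have e3 : gl 𝕂 n z * gl 𝕂 n x
      = piA 𝕂 n (FreeAlgebra.ι 𝕂 ⟨[z, x], isColumn_pair (lt_of_lt_of_le h1 h2)⟩) :=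
    gl_mul_col 𝕂 n (isColumn_pair (lt_of_lt_of_le h1 h2)) (by simp)
  have e2 : gl 𝕂 n y * piA 𝕂 n (FreeAlgebra.ι 𝕂 ⟨[z, x], isColumn_pair (lt_of_lt_of_le h1 h2)⟩)
      = piA 𝕂 n (FreeAlgebra.ι 𝕂 ⟨[y, x], isColumn_pair h1⟩) * gl 𝕂 n z := by
    have := piA_rule 𝕂 n (trule_right h1 h2)
    simpa [colWordProd, gl] using this
  calc gl 𝕂 n y * gl 𝕂 n x * gl 𝕂 n z
      = piA 𝕂 n (FreeAlgebra.ι 𝕂 ⟨[y, x], isColumn_pair h1⟩) * gl 𝕂 n z := by rw [e1]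
    _ = gl 𝕂 n y * piA 𝕂 n (FreeAlgebra.ι 𝕂 ⟨[z, x], isColumn_pair (lt_of_lt_of_le h1 h2)⟩) :=
        e2.symm
    _ = gl 𝕂 n y * (gl 𝕂 n z * gl 𝕂 n x) := by rw [e3]
    _ = gl 𝕂 n y * gl 𝕂 n z * gl 𝕂 n x := (mul_assoc _ _ _).symm

lemma col_collect : ∀ (w : Word n) (h : IsColumn w),
    (w.map (gl 𝕂 n)).prod = piA 𝕂 n (FreeAlgebra.ι 𝕂 ⟨w, h⟩) := by
  intro w
  induction w with
  | nil => intro h; exact absurd rfl h.1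
  | cons a t ih =>
    intro h
    cases t with
    | nil => simp [gl, sing]
    | cons b t' =>
      have htail : IsColumn (b :: t') := isColumn_tail h (by simp)
      rw [List.map_cons, List.prod_cons, ih htail]
      exact gl_mul_col 𝕂 n h (by simp)

/-- The lift of `a ↦ gl a` to the free monoid. -/
noncomputable def psi0 : FreeMonoid (Fin n) →* QR 𝕂 n := FreeMonoid.lift (gl 𝕂 n)

lemma psi0_apply (w : FreeMonoid (Fin n)) :
    psi0 𝕂 n w = ((FreeMonoid.toList w).map (gl 𝕂 n)).prod := FreeMonoid.lift_apply _ _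

lemma knuth_prod {l1 l2 : List (Fin n)} (hk : KnuthStep n l1 l2) :
    (l1.map (gl 𝕂 n)).prod = (l2.map (gl 𝕂 n)).prod := by
  induction hk with
  | left p q x y z h1 h2 =>
    simp only [List.map_append, List.prod_append, List.map_cons, List.map_nil,
      List.prod_cons, List.prod_nil, mul_one]
    congr 2
    simpa only [mul_assoc] using ring_knuth_left 𝕂 n h1 h2
  | right p q x y z h1 h2 =>
    simp only [List.map_append, List.prod_append, List.map_cons, List.map_nil,
      List.prod_cons, List.prod_nil, mul_one]
    congr 2
    simpa only [mul_assoc] using ring_knuth_right 𝕂 n h1 h2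

lemma psi0_respects : placticCon n ≤ Con.ker (psi0 𝕂 n) := by
  apply Con.conGen_le.mpr
  intro u v huv
  show psi0 𝕂 n u = psi0 𝕂 n v
  rw [psi0_apply, psi0_apply]
  exact knuth_prod 𝕂 n huv

/-- The induced monoid map on the Plactic monoid. -/
noncomputable def psiM : PlacticMonoid n →* QR 𝕂 n :=
  Con.lift _ (psi0 𝕂 n) (psi0_respects 𝕂 n)

/-- The algebra map `𝕂[M_n] → 𝕂⟨C⟩/⟨F⟩`. -/
noncomputable def Psi : MonoidAlgebra 𝕂 (PlacticMonoid n) →ₐ[𝕂] QR 𝕂 n :=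
  MonoidAlgebra.lift 𝕂 _ _ (psiM 𝕂 n)

/-- The algebra map `𝕂⟨C⟩ → 𝕂[M_n]`. -/
noncomputable def Phi : FreeAlgebra 𝕂 (CLetter n) →ₐ[𝕂] MonoidAlgebra 𝕂 (PlacticMonoid n) :=
  FreeAlgebra.lift 𝕂 fun c =>
    MonoidAlgebra.of 𝕂 (PlacticMonoid n) ((placticCon n).mk' (FreeMonoid.ofList c.1))

lemma placticEq_con {u v : Word n} (h : PlacticEq n u v) :
    placticCon n (FreeMonoid.ofList u) (FreeMonoid.ofList v) := by
  induction h with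
  | rel a b hab => exact ConGen.Rel.of _ _ hab
  | refl a => exact (placticCon n).refl _
  | symm a b _ ih => exact (placticCon n).symm ih
  | trans a b c _ _ ih1 ih2 => exact (placticCon n).trans ih1 ih2

lemma trule_evalC {l r : CWord n} (h : TRule n l r) : PlacticEq n (evalC l) (evalC r) := by
  cases h with
  | one α β γ hc hP => simpa [evalC] using hP.2
  | two α β γ δ hc hP => simpa [evalC] using hP.2.2.2

lemma Phi_colWordProd (u : CWord n) :
    Phi 𝕂 n (colWordProd 𝕂 u) =
      MonoidAlgebra.of 𝕂 (PlacticMonoid n) ((placticCon n).mk' (FreeMonoid.ofList (evalC u))) := by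
  induction u with
  | nil => simp [colWordProd, evalC, MonoidAlgebra.one_def]
  | cons c u ih =>
    have h1 : colWordProd 𝕂 (c :: u) = FreeAlgebra.ι 𝕂 c * colWordProd 𝕂 u := by
      simp [colWordProd]
    have h2 : Phi 𝕂 n (FreeAlgebra.ι 𝕂 c)
        = MonoidAlgebra.of 𝕂 (PlacticMonoid n) ((placticCon n).mk' (FreeMonoid.ofList c.1)) :=
      FreeAlgebra.lift_ι_apply _ _
    have h3 : evalC (c :: u) = c.1 ++ evalC u := by simp [evalC]
    rw [h1, map_mul, ih, h2, ← map_mul, ← map_mul, ← FreeMonoid.ofList_append, h3]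

lemma Phi_rule {l r : CWord n} (h : TRule n l r) :
    Phi 𝕂 n (colWordProd 𝕂 l) = Phi 𝕂 n (colWordProd 𝕂 r) := by
  rw [Phi_colWordProd, Phi_colWordProd]
  congr 1
  exact Quotient.sound' (placticEq_con n (trule_evalC n h))

lemma phi_ker {a b : FreeAlgebra 𝕂 (CLetter n)}
    (hab : (TwoSidedIdeal.span (Fset 𝕂 n)).ringCon a b) : Phi 𝕂 n a = Phi 𝕂 n b := by
  have hmem : a - b ∈ TwoSidedIdeal.span (Fset 𝕂 n) := (TwoSidedIdeal.rel_iff _ _ _).mp hab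
  have h0 : a - b ∈ TwoSidedIdeal.ker (Phi 𝕂 n) := by
    rw [TwoSidedIdeal.mem_span_iff] at hmem
    apply hmem
    rintro x ⟨l, r, hlr, rfl⟩
    rw [SetLike.mem_coe, TwoSidedIdeal.mem_ker, map_sub, sub_eq_zero]
    exact Phi_rule 𝕂 n hlr
  rw [TwoSidedIdeal.mem_ker, map_sub, sub_eq_zero] at h0
  exact h0

/-- The algebra map `𝕂⟨C⟩/⟨F⟩ → 𝕂[M_n]` induced by `Phi`. -/
noncomputable def PhiQ : QR 𝕂 n →ₐ[𝕂] MonoidAlgebra 𝕂 (PlacticMonoid n) where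
  toFun := Quotient.lift (Phi 𝕂 n) fun a b hab => phi_ker 𝕂 n hab
  map_one' := map_one (Phi 𝕂 n)
  map_mul' := fun x y => Quotient.inductionOn₂' x y fun a b => map_mul (Phi 𝕂 n) a b
  map_zero' := map_zero (Phi 𝕂 n)
  map_add' := fun x y => Quotient.inductionOn₂' x y fun a b => map_add (Phi 𝕂 n) a b
  commutes' := fun r => (Phi 𝕂 n).commutes r

lemma PhiQ_piA (a : FreeAlgebra 𝕂 (CLetter n)) : PhiQ 𝕂 n (piA 𝕂 n a) = Phi 𝕂 n a := rfl

lemma prod_of_sing (l : List (Fin n)) :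
    (l.map fun a => MonoidAlgebra.of 𝕂 (PlacticMonoid n)
        ((placticCon n).mk' (FreeMonoid.ofList [a]))).prod
      = MonoidAlgebra.of 𝕂 (PlacticMonoid n) ((placticCon n).mk' (FreeMonoid.ofList l)) := by
  induction l with
  | nil => simp [MonoidAlgebra.one_def]
  | cons a t ih =>
    rw [List.map_cons, List.prod_cons, ih, ← map_mul, ← map_mul]
    rfl

lemma key_comp : (Psi 𝕂 n).comp (Phi 𝕂 n) = piA 𝕂 n := by
  apply FreeAlgebra.hom_ext
  funext c
  show Psi 𝕂 n (Phi 𝕂 n (FreeAlgebra.ι 𝕂 c)) = piA 𝕂 n (FreeAlgebra.ι 𝕂 c)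
  rw [show Phi 𝕂 n (FreeAlgebra.ι 𝕂 c)
      = MonoidAlgebra.of 𝕂 (PlacticMonoid n) ((placticCon n).mk' (FreeMonoid.ofList c.1)) from
    FreeAlgebra.lift_ι_apply _ _]
  rw [show (Psi 𝕂 n) (MonoidAlgebra.of 𝕂 (PlacticMonoid n)
      ((placticCon n).mk' (FreeMonoid.ofList c.1)))
      = psiM 𝕂 n ((placticCon n).mk' (FreeMonoid.ofList c.1)) from
    MonoidAlgebra.lift_of _ _]
  rw [show psiM 𝕂 n ((placticCon n).mk' (FreeMonoid.ofList c.1))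
      = psi0 𝕂 n (FreeMonoid.ofList c.1) from Con.lift_mk' _ _]
  rw [show psi0 𝕂 n (FreeMonoid.ofList c.1) = ((c.1).map (gl 𝕂 n)).prod from
    FreeMonoid.lift_ofList _ _]
  exact col_collect 𝕂 n c.1 c.2

lemma comp_left : (Psi 𝕂 n).comp (PhiQ 𝕂 n) = AlgHom.id 𝕂 (QR 𝕂 n) := by
  apply AlgHom.ext
  intro x
  obtain ⟨a, rfl⟩ := piA_surjective 𝕂 n x
  show Psi 𝕂 n (PhiQ 𝕂 n (piA 𝕂 n a)) = piA 𝕂 n a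
  rw [PhiQ_piA]
  exact AlgHom.congr_fun (key_comp 𝕂 n) a

lemma comp_right :
    (PhiQ 𝕂 n).comp (Psi 𝕂 n) = AlgHom.id 𝕂 (MonoidAlgebra 𝕂 (PlacticMonoid n)) := by
  apply MonoidAlgebra.algHom_ext
  intro g
  induction g using Con.induction_on with
  | H w =>
    show PhiQ 𝕂 n (Psi 𝕂 n (MonoidAlgebra.of 𝕂 (PlacticMonoid n) ((w : PlacticMonoid n))))
      = MonoidAlgebra.of 𝕂 (PlacticMonoid n) ((w : PlacticMonoid n))
    rw [show Psi 𝕂 n (MonoidAlgebra.of 𝕂 (PlacticMonoid n) ((w : PlacticMonoid n)))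
        = psiM 𝕂 n ((w : PlacticMonoid n)) from MonoidAlgebra.lift_of _ _]
    rw [show psiM 𝕂 n ((w : PlacticMonoid n)) = psi0 𝕂 n w from Con.lift_coe _ w]
    rw [psi0_apply]
    rw [map_list_prod]
    rw [List.map_map]
    have : (PhiQ 𝕂 n) ∘ (gl 𝕂 n) = fun a => MonoidAlgebra.of 𝕂 (PlacticMonoid n)
        ((placticCon n).mk' (FreeMonoid.ofList [a])) := by
      funext a
      show PhiQ 𝕂 n (piA 𝕂 n (FreeAlgebra.ι 𝕂 (sing a))) = _
      rw [PhiQ_piA]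
      exact FreeAlgebra.lift_ι_apply _ _
    rw [this, prod_of_sing]
    rfl
  exact Subsingleton.elim _ _

end RingSide

end Statement8Aux


/-- Let `𝕂` be a field and `F = {l − r : (l → r) ∈ T}`, a
finite subset of the free associative algebra `𝕂⟨C⟩` over the finite alphabet
`C`.  Then the Plactic algebra `𝕂[M_n]` is isomorphic as a `𝕂`-algebra to the
quotient `𝕂⟨C⟩/⟨F⟩` of the free associative algebra by the two-sided ideal
generated by `F`. -/
theorem statement8 (𝕂 : Type) [Field 𝕂] (n : ℕ) :
    (Fset 𝕂 n).Finite ∧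
    Nonempty (MonoidAlgebra 𝕂 (PlacticMonoid n) ≃ₐ[𝕂]
      (TwoSidedIdeal.span (Fset 𝕂 n)).ringCon.Quotient) := by
  exact ⟨Statement8Aux.fset_finite 𝕂 n,
    ⟨AlgEquiv.ofAlgHom (Statement8Aux.Psi 𝕂 n) (Statement8Aux.PhiQ 𝕂 n)
      (Statement8Aux.comp_left 𝕂 n) (Statement8Aux.comp_right 𝕂 n)⟩⟩
end

section
/- Let γ ∈ A and let α, β be columns over A with α ⪰ β. (1) If c_γ c_α c_β → c_{α'} c_η c_β → c_{α'} c_{β'} c_ζ is a sequence of two applications of rules of T (the first applied to c_γ c_α, the second to c_η c_β), then α' ⪰ β'. (2) If c_γ c_α c_β → c_{α'} c_η c_β → c_{α'} c_{β'} is such a sequence, then α' ⪰ β'. (3) If c_γ c_α c_β → c_{α'} c_β is a single application of a rule of T to c_γ c_α, then α' ⪰ β. -/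
namespace S13


open List

variable {n : ℕ}

abbrev DecW (s : Word n) : Prop := s.Pairwise (fun a b => b < a)
abbrev IncW (s : Word n) : Prop := s.Pairwise (fun a b => a < b)

def HasDecr (w : Word n) (m : ℕ) : Prop := ∃ s, s.Sublist w ∧ DecW s ∧ s.length = m

def DCpred (p : Fin n → Bool) : Prop := ∀ a b : Fin n, a ≤ b → p b = true → p a = true

lemma countP_not_aux (p : Fin n → Bool) (l : Word n) :
    l.countP p + l.countP (fun a => !(p a)) = l.length := by
  induction l with
  | nil => simp
  | cons a l ih =>
    by_cases h : p a
    · simp [List.countP_cons, h]; omega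
    · simp [List.countP_cons, h]; omega

lemma inc_mono {v : Word n} (hv : IncW v) {i j : ℕ} (hij : i ≤ j) (hj : j < v.length) :
    v[i]'(lt_of_le_of_lt hij hj) ≤ v[j] := by
  rcases eq_or_lt_of_le hij with rfl | h
  · exact le_refl _
  · exact le_of_lt (List.pairwise_iff_getElem.1 hv i j (lt_of_le_of_lt hij hj) hj h)

lemma ptwise {w s : Word n} (h : s <+ w) (hw : IncW w) :
    ∀ i (hi : i < s.length), w[i]'(lt_of_lt_of_le hi h.length_le) ≤ s[i] := by
  induction h with
  | slnil => intro i hi; exact absurd hi (by simp)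
  | @cons l₁ l₂ a h ih =>
    intro i hi
    have h1 : i < l₂.length := lt_of_lt_of_le hi h.length_le
    have h2 : i + 1 < (a :: l₂).length := by simpa using h1
    calc (a :: l₂)[i]'(lt_of_lt_of_le hi (h.cons a).length_le)
        ≤ (a :: l₂)[i+1]'h2 := inc_mono hw (by omega) h2
      _ = l₂[i]'h1 := List.getElem_cons_succ ..
      _ ≤ l₁[i] := ih (hw.of_cons) i hi
  | @cons_cons l₁ l₂ a h ih =>
    intro i hi
    cases i with
    | zero => simp
    | succ j =>
      have hj : j < l₁.length := by simpa using hi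
      have := ih (hw.of_cons) j hj
      simpa using this

lemma cnt_iff_getElem {v : Word n} (hv : IncW v) {p : Fin n → Bool} (hp : DCpred p)
    {i : ℕ} (hi : i < v.length) : i + 1 ≤ v.countP p ↔ p (v[i]) = true := by
  constructor
  · intro hcnt
    rw [List.countP_eq_length_filter] at hcnt
    have hifl : i < (v.filter p).length := hcnt
    have h1 : p ((v.filter p)[i]) = true := (List.mem_filter.1 (List.getElem_mem hifl)).2
    have h2 : v[i] ≤ (v.filter p)[i] := ptwise List.filter_sublist hv i hifl
    exact hp _ _ h2 h1
  · intro hpv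
    have h1 : (v.take (i+1)).countP p = (v.take (i+1)).length := by
      rw [List.countP_eq_length]
      intro a ha
      obtain ⟨j, hj, rfl⟩ := List.mem_iff_getElem.1 ha
      have hj' : j ≤ i := by simp [List.length_take] at hj; omega
      rw [List.getElem_take]
      exact hp _ _ (inc_mono hv hj' hi) hpv
    have h2 : (v.take (i+1)).length = i + 1 := by simp [List.length_take]; omega
    have h3 := (List.take_sublist (i+1) v).countP_le (p := p)
    omega



lemma knuth_perm {u v : Word n} (h : KnuthStep n u v) : u.Perm v := by
  cases h with
  | left u v x y z h1 h2 =>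
    exact ((List.Perm.swap z x [y]).append_left u).append_right v
  | right u v x y z h1 h2 =>
    exact (((List.Perm.swap z x []).cons y).append_left u).append_right v

lemma plactic_perm {u v : Word n} (h : PlacticEq n u v) : u.Perm v := by
  induction h with
  | rel a b hab => exact knuth_perm hab
  | refl a => exact List.Perm.refl a
  | symm a b _ ih => exact ih.symm
  | trans a b c _ _ ih1 ih2 => exact ih1.trans ih2

lemma sub3 {a b c : Fin n} {s : Word n} (h : s <+ [a,b,c]) :
    s = [] ∨ s = [a] ∨ s = [b] ∨ s = [c] ∨ s = [a,b] ∨ s = [a,c] ∨ s = [b,c] ∨ s = [a,b,c] := by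
  rcases List.sublist_cons_iff.1 h with h' | ⟨r, rfl, hr⟩
  · rcases List.sublist_cons_iff.1 h' with h'' | ⟨r, rfl, hr⟩
    · rcases List.sublist_cons_iff.1 h'' with h3 | ⟨r, rfl, hr⟩
      · simp [List.sublist_nil.1 h3]
      · simp [List.sublist_nil.1 hr]
    · rcases List.sublist_cons_iff.1 hr with h3 | ⟨r', rfl, hr'⟩
      · simp [List.sublist_nil.1 h3]
      · simp [List.sublist_nil.1 hr']
  · rcases List.sublist_cons_iff.1 hr with h' | ⟨r', rfl, hr'⟩
    · rcases List.sublist_cons_iff.1 h' with h'' | ⟨r', rfl, hr'⟩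
      · simp [List.sublist_nil.1 h'']
      · simp [List.sublist_nil.1 hr']
    · rcases List.sublist_cons_iff.1 hr' with h'' | ⟨r'', rfl, hr''⟩
      · simp [List.sublist_nil.1 h'']
      · simp [List.sublist_nil.1 hr'']

def GoodMap (s2 trip' : Word n) : Prop :=
  ∃ s2', s2' <+ trip' ∧ DecW s2' ∧ s2'.length = s2.length ∧
    (∀ x ∈ s2', ∃ y ∈ s2, x ≤ y) ∧ (∀ x ∈ s2', ∃ y ∈ s2, y ≤ x)

lemma selfmap {s2 trip' : Word n} (h : s2 <+ trip') (hd : DecW s2) : GoodMap s2 trip' :=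
  ⟨s2, h, hd, rfl, fun x hx => ⟨x, hx, le_refl x⟩, fun x hx => ⟨x, hx, le_refl x⟩⟩

lemma transfer3 {u v trip trip' : Word n}
    (hmap : ∀ s2, s2 <+ trip → DecW s2 → GoodMap s2 trip')
    {m : ℕ} (h : HasDecr (u ++ trip ++ v) m) : HasDecr (u ++ trip' ++ v) m := by
  obtain ⟨s, hsub, hdec, hlen⟩ := h
  rw [List.append_assoc] at hsub
  obtain ⟨s1, s23, rfl, h1, h23⟩ := List.sublist_append_iff.1 hsub
  obtain ⟨s2, s3, rfl, h2, h3⟩ := List.sublist_append_iff.1 h23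
  obtain ⟨hd1, hd23, hx1⟩ := List.pairwise_append.1 hdec
  obtain ⟨hd2, hd3, hx23⟩ := List.pairwise_append.1 hd23
  obtain ⟨s2', hsub', hdec', hlen', hup, hdn⟩ := hmap s2 h2 hd2
  refine ⟨s1 ++ (s2' ++ s3), ?_, ?_, ?_⟩
  · rw [List.append_assoc]
    exact h1.append (hsub'.append h3)
  · refine List.pairwise_append.2 ⟨hd1, ?_, ?_⟩
    · refine List.pairwise_append.2 ⟨hdec', hd3, ?_⟩
      intro x hx b hb
      obtain ⟨y, hy, hxy⟩ := hdn x hx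
      exact lt_of_lt_of_le (hx23 y hy b hb) hxy
    · intro a ha b hb
      rcases List.mem_append.1 hb with hb | hb
      · obtain ⟨y, hy, hxy⟩ := hup b hb
        exact lt_of_le_of_lt hxy (hx1 a ha y (List.mem_append.2 (Or.inl hy)))
      · exact hx1 a ha b (List.mem_append.2 (Or.inr hb))
  · simp only [List.length_append] at hlen ⊢
    omega



lemma mapL1 {x y z : Fin n} (h1 : x ≤ y) (h2 : y < z) :
    ∀ s2, s2 <+ [x,z,y] → DecW s2 → GoodMap s2 [z,x,y] := by
  intro s2 hs hd
  have hxz : x < z := lt_of_le_of_lt h1 h2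
  rcases sub3 hs with rfl|rfl|rfl|rfl|rfl|rfl|rfl|rfl
  · exact selfmap (by simp) hd
  · exact selfmap (by simp) hd
  · exact selfmap (by simp) hd
  · exact selfmap (by simp) hd
  · exact absurd ((List.pairwise_cons.1 hd).1 z (by simp)) (not_lt.2 (le_of_lt hxz))
  · exact absurd ((List.pairwise_cons.1 hd).1 y (by simp)) (not_lt.2 h1)
  · exact selfmap (by simp) hd
  · exact absurd ((List.pairwise_cons.1 hd).1 z (by simp)) (not_lt.2 (le_of_lt hxz))

lemma mapL2 {x y z : Fin n} (h1 : x ≤ y) (h2 : y < z) :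
    ∀ s2, s2 <+ [z,x,y] → DecW s2 → GoodMap s2 [x,z,y] := by
  intro s2 hs hd
  have hxz : x < z := lt_of_le_of_lt h1 h2
  rcases sub3 hs with rfl|rfl|rfl|rfl|rfl|rfl|rfl|rfl
  · exact selfmap (by simp) hd
  · exact selfmap (by simp) hd
  · exact selfmap (by simp) hd
  · exact selfmap (by simp) hd
  · -- [z,x] ↦ [z,y]
    refine ⟨[z,y], by simp, ?_, rfl, ?_, ?_⟩
    · exact List.pairwise_cons.2 ⟨fun a' ha' => by simp at ha'; subst ha'; exact h2, by simp⟩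
    · intro w hw
      simp only [List.mem_cons, List.not_mem_nil, or_false] at hw
      rcases hw with rfl | rfl
      · exact ⟨w, by simp, le_refl w⟩
      · exact ⟨z, by simp, le_of_lt h2⟩
    · intro w hw
      simp only [List.mem_cons, List.not_mem_nil, or_false] at hw
      rcases hw with rfl | rfl
      · exact ⟨x, by simp, le_of_lt hxz⟩
      · exact ⟨x, by simp, h1⟩
  · exact selfmap (by simp) hd
  · exact absurd ((List.pairwise_cons.1 hd).1 y (by simp)) (not_lt.2 h1)
  · exact absurd ((List.pairwise_cons.1 hd.of_cons).1 y (by simp)) (not_lt.2 h1)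

lemma mapR1 {x y z : Fin n} (h1 : x < y) (h2 : y ≤ z) :
    ∀ s2, s2 <+ [y,x,z] → DecW s2 → GoodMap s2 [y,z,x] := by
  intro s2 hs hd
  have hxz : x < z := lt_of_lt_of_le h1 h2
  rcases sub3 hs with rfl|rfl|rfl|rfl|rfl|rfl|rfl|rfl
  · exact selfmap (by simp) hd
  · exact selfmap (by simp) hd
  · exact selfmap (by simp) hd
  · exact selfmap (by simp) hd
  · exact selfmap (by simp) hd
  · exact absurd ((List.pairwise_cons.1 hd).1 z (by simp)) (not_lt.2 h2)
  · exact absurd ((List.pairwise_cons.1 hd).1 z (by simp)) (not_lt.2 (le_of_lt hxz))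
  · exact absurd ((List.pairwise_cons.1 hd.of_cons).1 z (by simp)) (not_lt.2 (le_of_lt hxz))

lemma mapR2 {x y z : Fin n} (h1 : x < y) (h2 : y ≤ z) :
    ∀ s2, s2 <+ [y,z,x] → DecW s2 → GoodMap s2 [y,x,z] := by
  intro s2 hs hd
  have hxz : x < z := lt_of_lt_of_le h1 h2
  rcases sub3 hs with rfl|rfl|rfl|rfl|rfl|rfl|rfl|rfl
  · exact selfmap (by simp) hd
  · exact selfmap (by simp) hd
  · exact selfmap (by simp) hd
  · exact selfmap (by simp) hd
  · exact absurd ((List.pairwise_cons.1 hd).1 z (by simp)) (not_lt.2 h2)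
  · exact selfmap (by simp) hd
  · -- [z,x] ↦ [y,x]
    refine ⟨[y,x], by simp, ?_, rfl, ?_, ?_⟩
    · exact List.pairwise_cons.2 ⟨fun a' ha' => by simp at ha'; subst ha'; exact h1, by simp⟩
    · intro w hw
      simp only [List.mem_cons, List.not_mem_nil, or_false] at hw
      rcases hw with rfl | rfl
      · exact ⟨z, by simp, h2⟩
      · exact ⟨w, by simp, le_refl w⟩
    · intro w hw
      simp only [List.mem_cons, List.not_mem_nil, or_false] at hw
      rcases hw with rfl | rfl
      · exact ⟨x, by simp, le_of_lt h1⟩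
      · exact ⟨w, by simp, le_refl w⟩
  · exact absurd ((List.pairwise_cons.1 hd).1 z (by simp)) (not_lt.2 h2)

lemma knuth_hasDecr {u v : Word n} (h : KnuthStep n u v) {m : ℕ} :
    HasDecr u m ↔ HasDecr v m := by
  cases h with
  | left u v x y z h1 h2 => exact ⟨transfer3 (mapL1 h1 h2), transfer3 (mapL2 h1 h2)⟩
  | right u v x y z h1 h2 => exact ⟨transfer3 (mapR1 h1 h2), transfer3 (mapR2 h1 h2)⟩

lemma knuth_filter {p : Fin n → Bool} (hp : DCpred p) {u v : Word n} (h : KnuthStep n u v) :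
    u.filter p = v.filter p ∨ KnuthStep n (u.filter p) (v.filter p) := by
  cases h with
  | left u v x y z h1 h2 =>
    by_cases hz : p z = true
    · have hx : p x = true := hp _ _ (le_of_lt (lt_of_le_of_lt h1 h2)) hz
      have hy : p y = true := hp _ _ (le_of_lt h2) hz
      right
      simp only [List.filter_append, List.filter_cons, hx, hy, hz, if_true, List.filter_nil]
      exact KnuthStep.left _ _ x y z h1 h2
    · left
      simp only [List.filter_append, List.filter_cons, hz, if_false, Bool.false_eq_true]
  | right u v x y z h1 h2 =>
    by_cases hz : p z = true
    · have hx : p x = true := hp _ _ (le_of_lt (lt_of_lt_of_le h1 h2)) hz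
      have hy : p y = true := hp _ _ h2 hz
      right
      simp only [List.filter_append, List.filter_cons, hx, hy, hz, if_true, List.filter_nil]
      exact KnuthStep.right _ _ x y z h1 h2
    · left
      simp [List.filter_append, List.filter_cons, hz]

lemma plactic_hasDecr {u v : Word n} (h : PlacticEq n u v) {p : Fin n → Bool} (hp : DCpred p)
    {m : ℕ} : HasDecr (u.filter p) m ↔ HasDecr (v.filter p) m := by
  induction h with
  | rel a b hab =>
    rcases knuth_filter hp hab with he | hs
    · rw [he]
    · exact knuth_hasDecr hs
  | refl a => exact Iff.rfl
  | symm a b _ ih => exact ih.symm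
  | trans a b c _ _ ih1 ih2 => exact ih1.trans ih2

lemma plactic_hasDecr' {u v : Word n} (h : PlacticEq n u v) {m : ℕ} :
    HasDecr u m ↔ HasDecr v m := by
  have := plactic_hasDecr h (p := fun _ => true) (fun a b _ hb => hb) (m := m)
  simpa using this

lemma plactic_countP {u v : Word n} (h : PlacticEq n u v) (p : Fin n → Bool) :
    u.countP p = v.countP p := (plactic_perm h).countP_eq p

lemma dc_le (t : Fin n) : DCpred (fun y => decide (y ≤ t)) := by
  intro a b hab hb; simp at hb ⊢; exact le_trans hab hb

lemma dc_lt (t : Fin n) : DCpred (fun y => decide (y < t)) := by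
  intro a b hab hb; simp at hb ⊢; exact lt_of_le_of_lt hab hb

lemma countP_split (p q : Fin n → Bool) (l : Word n) :
    l.countP p = l.countP (fun y => p y && q y) + l.countP (fun y => p y && !(q y)) := by
  induction l with
  | nil => simp
  | cons a l ih =>
    by_cases hpa : p a = true <;> by_cases hqa : q a = true <;>
      simp [List.countP_cons, hpa, hqa, ih] <;> omega

def rvg (w : Word n) (i : ℕ) (h : i < w.length) : Fin n := w.reverse[i]'(by simpa using h)

lemma rvg_mono {w : Word n} (hw : IncW w.reverse) {i j : ℕ} (hij : i ≤ j) (hj : j < w.length) :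
    rvg w i (lt_of_le_of_lt hij hj) ≤ rvg w j hj :=
  inc_mono hw hij (by simpa using hj)

lemma rvg_mem {w : Word n} {i : ℕ} (h : i < w.length) : rvg w i h ∈ w :=
  List.mem_reverse.1 (List.getElem_mem _)

lemma mem_rvg {w : Word n} {x : Fin n} (hx : x ∈ w) : ∃ i, ∃ h : i < w.length, rvg w i h = x := by
  obtain ⟨i, hi, he⟩ := List.mem_iff_getElem.1 (List.mem_reverse.2 hx)
  exact ⟨i, by simpa using hi, he⟩

lemma col_dec {w : Word n} (h : IsColumn w) : DecW w := by
  have : IsTrans (Fin n) (fun a b : Fin n => b < a) := ⟨fun a b c h1 h2 => lt_trans h2 h1⟩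
  exact List.isChain_iff_pairwise.1 h.2

lemma col_inc {w : Word n} (h : IsColumn w) : IncW w.reverse :=
  List.pairwise_reverse.2 (col_dec h)

lemma colGE_iff {u v : Word n} : ColGE u v ↔ (v.length ≤ u.length ∧
    ∀ i (h1 : i < u.length) (h2 : i < v.length), rvg u i h1 ≤ rvg v i h2) := by
  constructor
  · rintro ⟨hl, hp⟩
    exact ⟨hl, fun i h1 h2 => hp i _ _ (List.getElem?_eq_getElem (by simpa using h1))
      (List.getElem?_eq_getElem (by simpa using h2))⟩
  · rintro ⟨hl, hp⟩
    refine ⟨hl, fun i a b ha hb => ?_⟩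
    obtain ⟨h1, rfl⟩ := List.getElem?_eq_some_iff.1 ha
    obtain ⟨h2, rfl⟩ := List.getElem?_eq_some_iff.1 hb
    exact hp i (by simpa using h1) (by simpa using h2)

lemma cnt_col {w : Word n} (hw : IncW w.reverse) {p : Fin n → Bool} (hp : DCpred p)
    {i : ℕ} (hi : i < w.length) : i + 1 ≤ w.countP p ↔ p (rvg w i hi) = true := by
  have h := cnt_iff_getElem hw hp (v := w.reverse) (i := i) (by simpa using hi)
  rwa [(List.reverse_perm w).countP_eq] at h

lemma hasDecr_self {w : Word n} (hw : DecW w) : HasDecr w w.length :=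
  ⟨w, List.Sublist.refl w, hw, rfl⟩

lemma hasDecr_mono {w : Word n} {m m' : ℕ} (h : HasDecr w m) (hm : m' ≤ m) : HasDecr w m' := by
  obtain ⟨s, hsub, hdec, rfl⟩ := h
  exact ⟨s.take m', (List.take_sublist m' s).trans hsub,
    List.Pairwise.sublist (List.take_sublist m' s) hdec, by simp [List.length_take]; omega⟩

lemma hasDecr_filter_left {c : Word n} (d : Word n) (hc : DecW c) (p : Fin n → Bool) :
    HasDecr ((c ++ d).filter p) (c.countP p) := by
  rw [List.filter_append]
  exact ⟨c.filter p, List.sublist_append_left _ _, hc.filter p,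
    (List.countP_eq_length_filter (p := p) (l := c)).symm⟩

lemma S2 {c d : Word n} (hc : DecW c) (hd : DecW d) (hlen : d.length ≤ c.length)
    (hpw : ∀ i (h1 : i < c.length) (h2 : i < d.length), rvg c i h1 ≤ rvg d i h2)
    {m : ℕ} (h : HasDecr (c ++ d) m) : m ≤ c.length := by
  obtain ⟨s, hsub, hdec, rfl⟩ := h
  obtain ⟨A, B, rfl, hA, hB⟩ := List.sublist_append_iff.1 hsub
  cases B with
  | nil => simpa using hA.length_le
  | cons x B' =>
    have hbd : B'.length + 1 ≤ d.length := by simpa using hB.length_le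
    have hdr : IncW d.reverse := List.pairwise_reverse.2 hd
    have hBr : (x::B').reverse <+ d.reverse := hB.reverse
    have hb1' : B'.length < (x::B').reverse.length := by simp
    have hx1 : d.reverse[B'.length]'(by simp; omega) ≤ (x::B').reverse[B'.length]'hb1' :=
      ptwise hBr hdr B'.length hb1'
    have hx2 : (x::B').reverse[B'.length]'hb1' = x := by
      rw [List.getElem_reverse]
      simp
    have hblt : B'.length < c.length := by omega
    have htd : rvg c B'.length hblt ≤ rvg d B'.length (by omega) := hpw _ hblt (by omega)
    have hx1' : d.reverse[B'.length]'(by simp; omega) ≤ x := by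
      conv_rhs => rw [← hx2]
      exact hx1
    have htx : rvg c B'.length hblt ≤ x := le_trans htd hx1' 
    set t := rvg c B'.length hblt with ht
    have hAgt : ∀ a ∈ A, t < a := by
      intro a ha
      have := (List.pairwise_append.1 hdec).2.2 a ha x (by simp)
      exact lt_of_le_of_lt htx this
    have h1 : A.countP (fun y => decide (t < y)) = A.length :=
      List.countP_eq_length.2 (fun a ha => by simpa using hAgt a ha)
    have h2 : A.countP (fun y => decide (t < y)) ≤ c.countP (fun y => decide (t < y)) :=
      hA.countP_le
    have h3 : B'.length + 1 ≤ c.countP (fun y => decide (y ≤ t)) := by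
      have := (cnt_col (List.pairwise_reverse.2 hc) (dc_le t) hblt).2 (by simp [ht])
      omega
    have h4 := countP_not_aux (fun y => decide (y ≤ t)) c
    have h5 : c.countP (fun y => decide (t < y)) = c.countP (fun y => !(decide (y ≤ t))) := by
      apply List.countP_congr
      intro x hx
      by_cases hyt : x ≤ t
      · simp [hyt, not_lt.2 hyt]
      · simp [hyt, lt_of_not_ge hyt]
    simp only [List.length_append, List.length_cons]
    omega

lemma U1 {c : Word n} {hl : Fin n} {p : Fin n → Bool} (hp : DCpred p)
    (hmin : ∃ mc ∈ c, (∀ x ∈ c, mc ≤ x) ∧ mc ≤ hl)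
    {m : ℕ} (h : HasDecr ((c ++ [hl]).filter p) m) : m ≤ max (c.countP p) 1 := by
  obtain ⟨s, hsub, hdec, rfl⟩ := h
  rw [List.filter_append] at hsub
  obtain ⟨A, B, rfl, hA, hB⟩ := List.sublist_append_iff.1 hsub
  have hAc : A.length ≤ c.countP p := by
    rw [List.countP_eq_length_filter]; exact hA.length_le
  have hBl : B <+ [hl] := hB.trans List.filter_sublist
  rcases List.sublist_cons_iff.1 hBl with hB0 | ⟨r, rfl, hr⟩
  · rw [List.sublist_nil.1 hB0]
    simp only [List.length_append, List.length_nil]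
    omega
  · rw [List.sublist_nil.1 hr]
    cases A with
    | nil => simp
    | cons a A' =>
      obtain ⟨mc, hmc, hmcle, hmch⟩ := hmin
      have hgt : ∀ w ∈ a :: A', hl < w := fun w hw =>
        (List.pairwise_append.1 hdec).2.2 w hw hl (by simp)
      have hpa : p a = true := (List.mem_filter.1 (hA.subset (by simp))).2
      have hpmc : p mc = true := hp _ _ (hmcle a (List.mem_filter.1 (hA.subset (by simp))).1) hpa
      have hmcf : mc ∈ c.filter p := List.mem_filter.2 ⟨hmc, hpmc⟩
      have hmcA : mc ∉ (a :: A') := fun hmem => absurd (hgt mc hmem) (not_lt.2 hmch)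
      have h1 : (a::A').countP (fun y => decide (y ≠ mc)) = (a::A').length :=
        List.countP_eq_length.2 (fun w hw => by
          simp only [decide_eq_true_eq, ne_eq]
          rintro rfl
          exact hmcA hw)
      have h2 : (a::A').countP (fun y => decide (y ≠ mc)) ≤ (c.filter p).countP (fun y => decide (y ≠ mc)) :=
        hA.countP_le
      have h3 : (c.filter p).countP (fun y => decide (y ≠ mc)) < (c.filter p).length := by
        have hn := countP_not_aux (fun y => decide (y ≠ mc)) (c.filter p)
        have hpos : 0 < (c.filter p).countP (fun y => !(decide (y ≠ mc))) :=
          List.countP_pos_iff.2 ⟨mc, hmcf, by simp⟩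
        omega
      have h4 : (c.filter p).length = c.countP p := (List.countP_eq_length_filter (p := p) (l := c)).symm
      have h6 : ((a :: A') ++ [hl]).length = (a::A').length + 1 := by simp
      rw [h6]
      have h7 : (a::A').length + 1 ≤ c.countP p := by omega
      exact le_trans h7 (le_max_left _ _)

lemma U2 {w : Word n} (hw : DecW w) (g : Fin n) {p : Fin n → Bool}
    {m : ℕ} (h : HasDecr ((g :: w).filter p) m) :
    m ≤ max (w.countP p) (1 + w.countP (fun y => p y && decide (y < g))) := by
  obtain ⟨s, hsub, hdec, rfl⟩ := h
  rw [List.filter_cons] at hsub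
  by_cases hg : p g = true
  · rw [if_pos hg] at hsub
    rcases List.sublist_cons_iff.1 hsub with hs | ⟨r, rfl, hr⟩
    · have h0 := hs.length_le
      rw [← List.countP_eq_length_filter] at h0
      omega
    · have hrg : ∀ x ∈ r, x < g := (List.pairwise_cons.1 hdec).1
      have h1 : r.countP (fun y => decide (y < g)) = r.length :=
        List.countP_eq_length.2 (fun w' hw' => by simpa using hrg w' hw')
      have h2 : r.countP (fun y => decide (y < g)) ≤ (w.filter p).countP (fun y => decide (y < g)) :=
        hr.countP_le
      have h3 : (w.filter p).countP (fun y => decide (y < g)) = w.countP (fun y => p y && decide (y < g)) := by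
        rw [List.countP_eq_length_filter, List.countP_eq_length_filter, List.filter_filter]
        congr 1
        apply List.filter_congr
        intro x _
        exact Bool.and_comm _ _
      simp only [List.length_cons]
      omega
  · rw [if_neg hg] at hsub
    have h0 := hsub.length_le
    rw [← List.countP_eq_length_filter] at h0
    omega

lemma U3 {hl : Fin n} {w : Word n} (h : HasDecr (hl :: w) (w.length + 1)) :
    ∀ x ∈ w, x < hl := by
  obtain ⟨s, hsub, hdec, hlen⟩ := h
  rcases List.sublist_cons_iff.1 hsub with hs | ⟨r, rfl, hr⟩
  · have := hs.length_le
    omega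
  · have hrw : r = w := hr.eq_of_length (by simpa using hlen)
    subst hrw
    exact (List.pairwise_cons.1 hdec).1

lemma stage1 {g : Fin n} {A A' E : Word n}
    (hA : IsColumn A) (hA' : IsColumn A') (hE : IsColumn E)
    (hGE : ColGE A' E) (heq : PlacticEq n ([g] ++ A) (A' ++ E)) :
    ∃ hl : Fin n, E = [hl] ∧ A'.length = A.length ∧ g ≤ hl ∧
      (∀ x ∈ A, g ≤ x → hl ≤ x) ∧
      (∀ i (hi : i < A.length) (hi' : i < A'.length), rvg A' i hi' ≤ rvg A i hi) ∧
      (∀ i (hi : i < A.length) (hi' : i < A'.length),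
        rvg A' i hi' < rvg A i hi → g ≤ rvg A' i hi') ∧
      (∀ i (hi : i < A.length) (hi' : i < A'.length),
        (i = 0 ∨ ∃ hj : i - 1 < A.length, 0 < i ∧ rvg A (i-1) hj < hl) → rvg A' i hi' ≤ hl) := by
  have hdA := col_dec hA
  have hdA' := col_dec hA'
  have hdE := col_dec hE
  have hiA : IncW A.reverse := List.pairwise_reverse.2 hdA
  have hiA' : IncW A'.reverse := List.pairwise_reverse.2 hdA'
  obtain ⟨hlenGE, hpwGE⟩ := colGE_iff.1 hGE
  have hperm : ([g] ++ A).Perm (A' ++ E) := plactic_perm heq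
  have hlen : A.length + 1 = A'.length + E.length := by simpa using hperm.length_eq
  have hk : A.length ≤ A'.length := by
    have h0 : HasDecr ([g] ++ A) A.length := ⟨A, List.sublist_append_right _ _, hdA, rfl⟩
    exact S2 hdA' hdE hlenGE hpwGE ((plactic_hasDecr' heq).1 h0)
  have hEpos : 0 < E.length := List.length_pos_iff.2 hE.1
  have hE1 : E.length = 1 := by omega
  obtain ⟨hl, rfl⟩ := List.length_eq_one_iff.1 hE1
  have hkk : A'.length = A.length := by
    simp only [List.length_singleton] at hlen
    omega
  have hApos : 0 < A.length := List.length_pos_iff.2 hA.1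
  have hA'pos : 0 < A'.length := by omega
  have hcnt : ∀ p : Fin n → Bool, A.countP p + [g].countP p = A'.countP p + [hl].countP p := by
    intro p
    have h := hperm.countP_eq p
    simp only [List.countP_append] at h
    omega
  have hm0 : rvg A' 0 hA'pos ≤ hl := by
    have h := hpwGE 0 hA'pos (by simp)
    simpa [rvg] using h
  have hminA' : ∃ mc ∈ A', (∀ x ∈ A', mc ≤ x) ∧ mc ≤ hl := by
    refine ⟨rvg A' 0 hA'pos, rvg_mem _, ?_, hm0⟩
    intro x hx
    obtain ⟨j, hj, rfl⟩ := mem_rvg hx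
    exact rvg_mono hiA' (Nat.zero_le j) hj
  have hgh : g ≤ hl := by
    by_contra hgh'
    push_neg at hgh'
    have hg0 : ¬ (g ≤ hl) := not_le.2 hgh'
    have e1 : [g].countP (fun y => decide (y ≤ hl)) = 0 := by simp [List.countP_cons, hg0]
    have e2 : [hl].countP (fun y => decide (y ≤ hl)) = 1 := by simp [List.countP_cons]
    have hc := hcnt (fun y => decide (y ≤ hl))
    have ha1 : 1 ≤ A'.countP (fun y => decide (y ≤ hl)) := by
      have h0 := (cnt_col hiA' (dc_le hl) hA'pos).2 (by simp [hm0])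
      omega
    have hwit : HasDecr (([g] ++ A).filter (fun y => decide (y ≤ hl)))
        (A'.countP (fun y => decide (y ≤ hl)) + 1) := by
      have hfg : ([g] ++ A).filter (fun y => decide (y ≤ hl)) = A.filter (fun y => decide (y ≤ hl)) := by
        simp [List.singleton_append, List.filter_cons, hg0]
      rw [hfg]
      have hlenf : (A.filter (fun y => decide (y ≤ hl))).length
          = A'.countP (fun y => decide (y ≤ hl)) + 1 := by
        rw [← List.countP_eq_length_filter]
        omega
      exact hlenf ▸ hasDecr_self (List.Pairwise.filter _ hdA)
    have ht := (plactic_hasDecr heq (dc_le hl)).1 hwit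
    have hU := U1 (dc_le hl) hminA' ht
    rcases le_max_iff.1 hU with h | h <;> omega
  have hup : ∀ i (hi : i < A.length) (hi' : i < A'.length), rvg A' i hi' ≤ rvg A i hi := by
    intro i hi hi'
    have h1 : i + 1 ≤ A.countP (fun y => decide (y ≤ rvg A i hi)) :=
      (cnt_col hiA (dc_le _) hi).2 (by simp)
    have hc := hcnt (fun y => decide (y ≤ rvg A i hi))
    have h2 : i + 1 ≤ A'.countP (fun y => decide (y ≤ rvg A i hi)) := by
      by_cases hht : hl ≤ rvg A i hi
      · have hgt : g ≤ rvg A i hi := le_trans hgh hht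
        have e1 : [g].countP (fun y => decide (y ≤ rvg A i hi)) = 1 := by
          simp [List.countP_cons, hgt]
        have e2 : [hl].countP (fun y => decide (y ≤ rvg A i hi)) = 1 := by
          simp [List.countP_cons, hht]
        omega
      · have e2 : [hl].countP (fun y => decide (y ≤ rvg A i hi)) = 0 := by
          simp [List.countP_cons, hht]
        omega
    have h3 := (cnt_col hiA' (dc_le _) hi').1 h2
    simpa using h3
  have hminb : ∀ i (hi : i < A.length) (hi' : i < A'.length),
      rvg A' i hi' < rvg A i hi → g ≤ rvg A' i hi' := by
    intro i hi hi' hlt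
    by_contra hg'
    push_neg at hg'
    have h1 : i + 1 ≤ A'.countP (fun y => decide (y ≤ rvg A' i hi')) :=
      (cnt_col hiA' (dc_le _) hi').2 (by simp)
    have hc := hcnt (fun y => decide (y ≤ rvg A' i hi'))
    have e1 : [g].countP (fun y => decide (y ≤ rvg A' i hi')) = 0 := by
      have hng : ¬ (g ≤ rvg A' i hi') := not_le.2 hg'
      simp [List.countP_cons, hng]
    have h2 : i + 1 ≤ A.countP (fun y => decide (y ≤ rvg A' i hi')) := by omega
    have h3 := (cnt_col hiA (dc_le _) hi).1 h2
    simp at h3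
    exact absurd h3 (not_le.2 hlt)
  have hmm : ∀ x ∈ A, g ≤ x → hl ≤ x := by
    intro x hx hgx
    by_contra hxm
    push_neg at hxm
    have e1 : [g].countP (fun y => decide (y ≤ x)) = 1 := by simp [List.countP_cons, hgx]
    have e2 : [hl].countP (fun y => decide (y ≤ x)) = 0 := by
      have hnh : ¬ (hl ≤ x) := not_le.2 hxm
      simp [List.countP_cons, hnh]
    have hc := hcnt (fun y => decide (y ≤ x))
    have hwit := hasDecr_filter_left [hl] hdA' (fun y => decide (y ≤ x))
    have ht := (plactic_hasDecr heq (dc_le x)).2 hwit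
    rw [List.singleton_append] at ht
    have hU := U2 hdA g ht
    have hsplit := countP_split (fun y => decide (y ≤ x)) (fun y => decide (y < g)) A
    have hpos : 0 < A.countP (fun y => decide (y ≤ x) && !(decide (y < g))) :=
      List.countP_pos_iff.2 ⟨x, hx, by simp [not_lt.2 hgx]⟩
    rcases le_max_iff.1 hU with h | h <;> omega
  have hbp : ∀ i (hi : i < A.length) (hi' : i < A'.length),
      (i = 0 ∨ ∃ hj : i - 1 < A.length, 0 < i ∧ rvg A (i-1) hj < hl) → rvg A' i hi' ≤ hl := by
    intro i hi hi' hcond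
    rcases hcond with rfl | ⟨hj, hi0, hprev⟩
    · exact hm0
    · by_cases hcaseA : rvg A (i-1) hj < g
      · have hflt : i ≤ A.countP (fun y => decide (y < g)) := by
          have h0 := (cnt_col hiA (dc_lt g) hj).2 (by simp [hcaseA])
          omega
        have hwit : HasDecr (([g] ++ A).filter (fun y => decide (y ≤ g))) (i+1) := by
          refine ⟨g :: (A.filter (fun y => decide (y < g))).take i, ?_, ?_, ?_⟩
          · have hfg : ([g] ++ A).filter (fun y => decide (y ≤ g))
                = g :: A.filter (fun y => decide (y ≤ g)) := by
              simp [List.singleton_append, List.filter_cons]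
            rw [hfg]
            refine List.Sublist.cons₂ g ?_
            refine (List.take_sublist _ _).trans ?_
            have hff : A.filter (fun y => decide (y < g))
                = (A.filter (fun y => decide (y ≤ g))).filter (fun y => decide (y < g)) := by
              rw [List.filter_filter]
              apply List.filter_congr
              intro w _
              by_cases hw : w < g
              · simp [hw, le_of_lt hw]
              · simp [hw]
            rw [hff]
            exact List.filter_sublist
          · refine List.pairwise_cons.2 ⟨?_, ?_⟩
            · intro a' ha'
              have hmem := (List.take_sublist _ _).subset ha'
              exact of_decide_eq_true (List.mem_filter.1 hmem).2
            · exact List.Pairwise.sublist (List.take_sublist _ _) (List.Pairwise.filter _ hdA)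
          · simp only [List.length_cons, List.length_take, ← List.countP_eq_length_filter]
            omega
        have ht := (plactic_hasDecr heq (dc_le g)).1 hwit
        have hU := U1 (dc_le g) hminA' ht
        have h2 : i + 1 ≤ A'.countP (fun y => decide (y ≤ g)) := by
          rcases le_max_iff.1 hU with h | h <;> omega
        have h3 := (cnt_col hiA' (dc_le g) hi').1 h2
        simp at h3
        exact le_trans h3 hgh
      · push_neg at hcaseA
        have e1 : [g].countP (fun y => decide (y ≤ rvg A (i-1) hj)) = 1 := by
          simp [List.countP_cons, hcaseA]
        have e2 : [hl].countP (fun y => decide (y ≤ rvg A (i-1) hj)) = 0 := by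
          have hnh : ¬ (hl ≤ rvg A (i-1) hj) := not_le.2 hprev
          simp [List.countP_cons, hnh]
        have hc := hcnt (fun y => decide (y ≤ rvg A (i-1) hj))
        have hwit := hasDecr_filter_left [hl] hdA' (fun y => decide (y ≤ rvg A (i-1) hj))
        have ht2 := (plactic_hasDecr heq (dc_le (rvg A (i-1) hj))).2 hwit
        rw [List.singleton_append] at ht2
        have hU := U2 hdA g ht2
        have h6 : i ≤ A.countP (fun y => decide (y ≤ rvg A (i-1) hj)) := by
          have h0 := (cnt_col hiA (dc_le (rvg A (i-1) hj)) hj).2 (by simp)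
          omega
        have h5 : A.countP (fun y => decide (y ≤ rvg A (i-1) hj) && decide (y < g))
            ≤ A.countP (fun y => decide (y < g)) :=
          List.countP_mono_left (fun w _ hw => by
            simp only [Bool.and_eq_true] at hw
            exact hw.2)
        have h7 : ¬ (i ≤ A.countP (fun y => decide (y < g))) := by
          intro hcon
          have h8 := (cnt_col hiA (dc_lt g) hj).1 (by omega)
          simp at h8
          exact absurd h8 (not_lt.2 hcaseA)
        rcases le_max_iff.1 hU with h | h <;> omega
  exact ⟨hl, rfl, hkk, hgh, hmm, hup, hminb, hbp⟩

lemma stage1single {g : Fin n} {A A' : Word n}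
    (hA : IsColumn A) (hA' : IsColumn A') (heq : PlacticEq n ([g] ++ A) A') :
    A'.length = A.length + 1 ∧
      ∀ i (hi : i < A.length) (hi' : i < A'.length), rvg A' i hi' ≤ rvg A i hi := by
  have hdA := col_dec hA
  have hiA : IncW A.reverse := List.pairwise_reverse.2 hdA
  have hiA' : IncW A'.reverse := List.pairwise_reverse.2 (col_dec hA')
  have hperm := plactic_perm heq
  have hlen : A'.length = A.length + 1 := by simpa using hperm.length_eq.symm
  refine ⟨hlen, fun i hi hi' => ?_⟩
  have h1 : i + 1 ≤ A.countP (fun y => decide (y ≤ rvg A i hi)) :=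
    (cnt_col hiA (dc_le _) hi).2 (by simp)
  have hc := hperm.countP_eq (fun y => decide (y ≤ rvg A i hi))
  simp only [List.countP_append] at hc
  have h2 : i + 1 ≤ A'.countP (fun y => decide (y ≤ rvg A i hi)) := by omega
  have h3 := (cnt_col hiA' (dc_le _) hi').1 h2
  simpa using h3

lemma rvg_snoc_lt {B' B : Word n} {hl : Fin n} (h : B'.reverse = B.reverse ++ [hl])
    {i : ℕ} (hi : i < B'.length) (hib : i < B.length) : rvg B' i hi = rvg B i hib := by
  unfold rvg
  rw [List.getElem_of_eq h, List.getElem_append, dif_pos (by simpa using hib)]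

lemma rvg_snoc_eq {B' B : Word n} {hl : Fin n} (h : B'.reverse = B.reverse ++ [hl])
    (hi : B.length < B'.length) : rvg B' B.length hi = hl := by
  unfold rvg
  rw [List.getElem_of_eq h, List.getElem_append, dif_neg (by simp)]
  simp

end S13

/-- Let `γ ∈ A` (identified with the length-one column `γ`,
so that `c_γ ∈ C`) and let `α, β` be columns over `A` with `α ⪰ β`.
(1) If `c_γ c_α c_β → c_{α'} c_η c_β → c_{α'} c_{β'} c_ζ` is a sequence of two
applications of rules of `T` (the first applied to `c_γ c_α`, the second to
`c_η c_β`), then `α' ⪰ β'`.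
(2) If `c_γ c_α c_β → c_{α'} c_η c_β → c_{α'} c_{β'}` is such a sequence, then
`α' ⪰ β'`.
(3) If `c_γ c_α c_β → c_{α'} c_β` is a single application of a rule of `T` to
`c_γ c_α`, then `α' ⪰ β`. -/
theorem statement13 {n : ℕ} (g : Fin n) (cγ cα cβ : CLetter n)
    (hγ : cγ.1 = [g]) (hab : ColGE cα.1 cβ.1) :
    (∀ cα' cη cβ' cζ : CLetter n,
      TRule n [cγ, cα] [cα', cη] → TRule n [cη, cβ] [cβ', cζ] →
      ColGE cα'.1 cβ'.1) ∧
    (∀ cα' cη cβ' : CLetter n,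
      TRule n [cγ, cα] [cα', cη] → TRule n [cη, cβ] [cβ'] →
      ColGE cα'.1 cβ'.1) ∧
    (∀ cα' : CLetter n, TRule n [cγ, cα] [cα'] → ColGE cα'.1 cβ.1) := by
  have hApos : 0 < cα.1.length := List.length_pos_iff.2 cα.2.1
  have hBpos : 0 < cβ.1.length := List.length_pos_iff.2 cβ.2.1
  obtain ⟨hlab, hpwab⟩ := S13.colGE_iff.1 hab
  have hiA : S13.IncW cα.1.reverse := S13.col_inc cα.2
  have hiB : S13.IncW cβ.1.reverse := S13.col_inc cβ.2
  refine ⟨?_, ?_, ?_⟩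
  · -- (1)
    intro cα' cη cβ' cζ h1 h2
    cases h1 with
    | two _ _ _ _ hnc hP =>
      obtain ⟨hcolA', hcolE, hGE1, heq1⟩ := hP
      rw [hγ] at heq1
      obtain ⟨hl, hEeq, hkk, hgh, hmm, hup, hminb, hbp⟩ :=
        S13.stage1 cα.2 cα'.2 cη.2 hGE1 heq1
      cases h2 with
      | two _ _ _ _ hnc2 hP2 =>
        obtain ⟨hcolB', hcolZ, hGE2, heq2⟩ := hP2
        rw [hEeq] at heq2
        obtain ⟨m, hZeq, hkk2, hhm, hmm2, hup2, hminb2, hbp2⟩ :=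
          S13.stage1 cβ.2 cβ'.2 cζ.2 hGE2 heq2
        rw [hZeq] at heq2
        have hiB' : S13.IncW cβ'.1.reverse := S13.col_inc cβ'.2
        rw [S13.colGE_iff]
        refine ⟨by omega, ?_⟩
        intro i h1' h2'
        have hiK : i < cα.1.length := by omega
        have hiL : i < cβ.1.length := by omega
        by_cases hcmp : S13.rvg cβ.1 i hiL ≤ S13.rvg cβ'.1 i h2'
        · exact le_trans (hup i hiK h1') (le_trans (hpwab i hiK hiL) hcmp)
        · push_neg at hcmp
          have hminB : hl ≤ S13.rvg cβ'.1 i h2' := hminb2 i hiL h2' hcmp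
          rcases Nat.eq_zero_or_pos i with rfl | hi0
          · exact le_trans (hbp 0 hiK h1' (Or.inl rfl)) hminB
          · have hjL : i - 1 < cβ.1.length := by omega
            have hprev : S13.rvg cβ.1 (i-1) hjL < hl := by
              by_contra hge
              push_neg at hge
              have hmge : m ≤ S13.rvg cβ.1 (i-1) hjL := hmm2 _ (S13.rvg_mem hjL) hge
              have hc1 : i + 1 ≤ cβ'.1.countP (fun y => decide (y ≤ S13.rvg cβ'.1 i h2')) :=
                (S13.cnt_col hiB' (S13.dc_le _) h2').2 (by simp)
              have hcnt2 : ∀ p : Fin n → Bool,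
                  cβ.1.countP p + [hl].countP p = cβ'.1.countP p + [m].countP p := by
                intro p
                have hp2 := (S13.plactic_perm heq2).countP_eq p
                simp only [List.countP_append] at hp2
                omega
              have hc := hcnt2 (fun y => decide (y ≤ S13.rvg cβ'.1 i h2'))
              have e1 : [hl].countP (fun y => decide (y ≤ S13.rvg cβ'.1 i h2')) = 1 := by
                simp [List.countP_cons, hminB]
              by_cases hmt : m ≤ S13.rvg cβ'.1 i h2'
              · have e2 : [m].countP (fun y => decide (y ≤ S13.rvg cβ'.1 i h2')) = 1 := by
                  simp [List.countP_cons, hmt]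
                have h4 : i + 1 ≤ cβ.1.countP (fun y => decide (y ≤ S13.rvg cβ'.1 i h2')) := by omega
                have h5 := (S13.cnt_col hiB (S13.dc_le _) hiL).1 h4
                simp at h5
                exact absurd h5 (not_le.2 hcmp)
              · have e2 : [m].countP (fun y => decide (y ≤ S13.rvg cβ'.1 i h2')) = 0 := by
                  have : ¬ (m ≤ S13.rvg cβ'.1 i h2') := hmt
                  simp [List.countP_cons, this]
                have h4 : i ≤ cβ.1.countP (fun y => decide (y ≤ S13.rvg cβ'.1 i h2')) := by omega
                have h5 := (S13.cnt_col hiB (S13.dc_le (S13.rvg cβ'.1 i h2')) hjL).1 (by omega)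
                simp at h5
                exact absurd (le_trans hmge h5) hmt
            have hjK : i - 1 < cα.1.length := by omega
            have hprevA : S13.rvg cα.1 (i-1) hjK < hl :=
              lt_of_le_of_lt (hpwab (i-1) hjK hjL) hprev
            exact le_trans (hbp i hiK h1' (Or.inr ⟨hjK, hi0, hprevA⟩)) hminB
  · -- (2)
    intro cα' cη cβ' h1 h2
    cases h1 with
    | two _ _ _ _ hnc hP =>
      obtain ⟨hcolA', hcolE, hGE1, heq1⟩ := hP
      rw [hγ] at heq1
      obtain ⟨hl, hEeq, hkk, hgh, hmm, hup, hminb, hbp⟩ :=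
        S13.stage1 cα.2 cα'.2 cη.2 hGE1 heq1
      cases h2 with
      | one _ _ _ hnc2 hP2 =>
        obtain ⟨hcolB', heq2⟩ := hP2
        rw [hEeq] at heq2
        have hpermB := S13.plactic_perm heq2
        have hlenB : cβ'.1.length = cβ.1.length + 1 := by simpa using hpermB.length_eq.symm
        have hmax : ∀ x ∈ cβ.1, x < hl := by
          apply S13.U3
          have hwit : S13.HasDecr cβ'.1 (cβ.1.length + 1) :=
            hlenB ▸ S13.hasDecr_self (S13.col_dec cβ'.2)
          have h := (S13.plactic_hasDecr' heq2).2 hwit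
          rwa [List.singleton_append] at h
        have hlk : cβ.1.length < cα.1.length := by
          by_contra hno
          push_neg at hno
          have hkl : cβ.1.length = cα.1.length := le_antisymm hlab hno
          have hmem : hl ∈ [g] ++ cα.1 := by
            have hmem0 : hl ∈ cα'.1 ++ cη.1 := by rw [hEeq]; simp
            exact ((S13.plactic_perm heq1).mem_iff).2 hmem0
          have hchain : S13.rvg cα.1 (cβ.1.length - 1) (by omega) < hl := by
            have h2' := hpwab (cβ.1.length - 1) (by omega) (by omega)
            have h3' := hmax _ (S13.rvg_mem (show cβ.1.length - 1 < cβ.1.length by omega))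
            exact lt_of_le_of_lt h2' h3'
          rcases List.mem_append.1 hmem with hg' | hA'
          · simp at hg'
            subst hg'
            have hgall : ∀ x ∈ cα.1, x < hl := by
              intro x hx
              obtain ⟨j, hj, rfl⟩ := S13.mem_rvg hx
              exact lt_of_le_of_lt (S13.rvg_mono hiA (show j ≤ cβ.1.length - 1 by omega) (by omega)) hchain
            have hdec : S13.DecW (hl :: cα.1) :=
              List.pairwise_cons.2 ⟨fun x hx => hgall x hx, S13.col_dec cα.2⟩
            have hwit : S13.HasDecr ([hl] ++ cα.1) (cα.1.length + 1) := by
              have h := S13.hasDecr_self hdec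
              simpa using h
            have ht := (S13.plactic_hasDecr' heq1).1 hwit
            obtain ⟨hlGE, hpwGE⟩ := S13.colGE_iff.1 hGE1
            have := S13.S2 (S13.col_dec cα'.2) (S13.col_dec cη.2) hlGE hpwGE ht
            omega
          · obtain ⟨j, hj, rfl⟩ := S13.mem_rvg hA'
            have h1' := S13.rvg_mono hiA (show j ≤ cβ.1.length - 1 by omega) (by omega)
            exact absurd (lt_of_le_of_lt h1' hchain) (lt_irrefl _)
        have hBrev : cβ'.1.reverse = cβ.1.reverse ++ [hl] := by
          have : IsAntisymm (Fin n) (· < ·) := ⟨fun a b h1 h2 => absurd h2 (asymm h1)⟩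
          have hpermr : cβ'.1.reverse.Perm (cβ.1.reverse ++ [hl]) := by
            refine (List.reverse_perm _).trans ?_
            refine (hpermB.symm).trans ?_
            rw [List.singleton_append]
            refine (List.perm_append_singleton _ _).symm.trans ?_
            exact List.Perm.append_right [hl] (List.reverse_perm _).symm
          refine List.Perm.eq_of_pairwise' (S13.col_inc cβ'.2) ?_ hpermr
          refine List.pairwise_append.2 ⟨S13.col_inc cβ.2, List.pairwise_singleton _ _, ?_⟩
          intro x hx y hy
          simp only [List.mem_singleton] at hy
          subst hy
          exact hmax x (List.mem_reverse.1 hx)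
        rw [S13.colGE_iff]
        refine ⟨by omega, ?_⟩
        intro i h1' h2'
        have hiK : i < cα.1.length := by omega
        rcases lt_or_ge i cβ.1.length with hil | hil
        · rw [S13.rvg_snoc_lt hBrev h2' hil]
          exact le_trans (hup i hiK h1') (hpwab i hiK hil)
        · have hieq : i = cβ.1.length := by
            have := h2'
            omega
          subst hieq
          rw [S13.rvg_snoc_eq hBrev h2']
          rcases Nat.eq_zero_or_pos cβ.1.length with hzero | hpos
          · exact hbp _ hiK h1' (Or.inl hzero)
          · refine hbp _ hiK h1' (Or.inr ⟨by omega, hpos, ?_⟩)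
            have hjL : cβ.1.length - 1 < cβ.1.length := by omega
            have hprev := hmax _ (S13.rvg_mem hjL)
            exact lt_of_le_of_lt (hpwab _ (by omega) hjL) hprev
  · -- (3)
    intro cα' h1
    cases h1 with
    | one _ _ _ hnc hP =>
      obtain ⟨hcolA', heq1⟩ := hP
      rw [hγ] at heq1
      obtain ⟨hlen1, hup1⟩ := S13.stage1single cα.2 cα'.2 heq1
      rw [S13.colGE_iff]
      exact ⟨by omega, fun i h1' h2' =>
        le_trans (hup1 i (by omega) h1') (hpwab i (by omega) h2')⟩
end

section
/- L is a regular language over A, and every element of the Plactic monoid M_n has at least one representative in L. -/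
/-- The language `L ⊆ A*` of column readings of tableaux: concatenations of
columns `α⁽¹⁾ ⋯ α⁽ᵏ⁾` (`k ≥ 0`) with `α⁽ʲ⁾ ⪰ α⁽ʲ⁺¹⁾` for all `j`. -/
def LangL (n : ℕ) : Language (Fin n) :=
  {w : Word n | ∃ cols : List (Word n),
    (∀ c ∈ cols, IsColumn c) ∧ cols.Chain' ColGE ∧ w = cols.flatten}

namespace Plactic14
variable {n : ℕ}

lemma pe_refl (u : Word n) : PlacticEq n u u := Relation.EqvGen.refl u
lemma pe_symm {u v : Word n} (h : PlacticEq n u v) : PlacticEq n v u := Relation.EqvGen.symm u v h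
lemma pe_trans {u v w : Word n} (h1 : PlacticEq n u v) (h2 : PlacticEq n v w) :
    PlacticEq n u w := Relation.EqvGen.trans u v w h1 h2

lemma knuth_ctx {u v : Word n} (p q : Word n) (h : KnuthStep n u v) :
    KnuthStep n (p ++ u ++ q) (p ++ v ++ q) := by
  cases h with
  | left u' v' x y z h1 h2 =>
    have := KnuthStep.left (n := n) (p ++ u') (v' ++ q) x y z h1 h2
    simpa [List.append_assoc] using this
  | right u' v' x y z h1 h2 =>
    have := KnuthStep.right (n := n) (p ++ u') (v' ++ q) x y z h1 h2
    simpa [List.append_assoc] using this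

lemma pe_ctx {u v : Word n} (p q : Word n) (h : PlacticEq n u v) :
    PlacticEq n (p ++ u ++ q) (p ++ v ++ q) := by
  induction h with
  | rel a b hab => exact Relation.EqvGen.rel _ _ (knuth_ctx p q hab)
  | refl a => exact pe_refl _
  | symm a b _ ih => exact pe_symm ih
  | trans a b c _ _ ih1 ih2 => exact pe_trans ih1 ih2

lemma pe_cons {u v : Word n} (a : Fin n) (h : PlacticEq n u v) :
    PlacticEq n (a :: u) (a :: v) := by
  have := pe_ctx [a] [] h
  simpa using this

lemma pe_append_left {u v : Word n} (p : Word n) (h : PlacticEq n u v) :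
    PlacticEq n (p ++ u) (p ++ v) := by
  have := pe_ctx p [] h; simpa using this

lemma pe_append_right {u v : Word n} (q : Word n) (h : PlacticEq n u v) :
    PlacticEq n (u ++ q) (v ++ q) := by
  have := pe_ctx [] q h; simpa using this

lemma desc_last_lt {a b : Fin n} :
    ∀ l : Word n, List.Chain' (fun p q : Fin n => q < p) (b :: l ++ [a]) → a < b := by
  intro l
  induction l generalizing b with
  | nil => intro h; exact (List.isChain_cons_cons.mp h).1
  | cons c l' ih =>
    intro h
    rcases List.isChain_cons_cons.mp h with ⟨hcb, h'⟩
    exact lt_trans (ih (b := c) h') hcb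

lemma slide_small (x a : Fin n) :
    ∀ (D r : Word n), List.Chain' (fun p q : Fin n => q < p) (D ++ [a]) → x ≤ a →
      PlacticEq n (x :: (D ++ a :: r)) (D ++ x :: a :: r) := by
  intro D
  induction D with
  | nil => intro r _ _; exact pe_refl _
  | cons T D' ih =>
    intro r hchain hxa
    cases D' with
    | nil =>
      have haT : a < T := (List.isChain_cons_cons.mp hchain).1
      have step := KnuthStep.left (n := n) [] r x a T hxa haT
      exact Relation.EqvGen.rel _ _ (by simpa using step)
    | cons b D'' =>
      rcases List.isChain_cons_cons.mp hchain with ⟨hbT, hchain'⟩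
      have hab : a < b := desc_last_lt _ hchain'
      have hxb : x ≤ b := le_of_lt (lt_of_le_of_lt hxa hab)
      have step := KnuthStep.left (n := n) [] (D'' ++ a :: r) x b T hxb hbT
      have s1 : PlacticEq n (x :: (T :: b :: D'' ++ a :: r)) (T :: (x :: (b :: D'' ++ a :: r))) :=
        Relation.EqvGen.rel _ _ (by simpa using step)
      have s2 : PlacticEq n (T :: (x :: (b :: D'' ++ a :: r))) (T :: (b :: D'' ++ x :: a :: r)) :=
        pe_cons T (ih r hchain' hxa)
      simpa using pe_trans s1 s2

def bumpA (x : Fin n) : Word n → Word n × Fin n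
  | [] => ([], x)
  | a :: t => if x ≤ a then (x :: t, a) else ((a :: (bumpA x t).1), (bumpA x t).2)

lemma bumpA_length (x : Fin n) : ∀ c : Word n, (bumpA x c).1.length = c.length := by
  intro c
  induction c with
  | nil => rfl
  | cons a t ih =>
    simp only [bumpA]
    split <;> simp [ih]

lemma le_bumpA_snd (x : Fin n) : ∀ c : Word n, x ≤ (bumpA x c).2 := by
  intro c
  induction c with
  | nil => simp [bumpA]
  | cons a t ih =>
    simp only [bumpA]
    split
    · simpa using ‹x ≤ a›
    · simpa using ih

lemma bumpA_head (x : Fin n) (c : Word n) :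
    (bumpA x c).1.head? = c.head? ∨ (bumpA x c).1.head? = some x := by
  cases c with
  | nil => left; rfl
  | cons a t =>
    simp only [bumpA]
    split
    · right; rfl
    · left; rfl

lemma bumpA_chain (x : Fin n) :
    ∀ c : Word n, List.Chain' (· < ·) c → List.Chain' (· < ·) (bumpA x c).1 := by
  intro c
  induction c with
  | nil => intro _; simp [bumpA, List.Chain']
  | cons a t ih =>
    intro hc
    rcases List.isChain_cons.mp hc with ⟨hhead, ht⟩
    simp only [bumpA]
    split
    · rename_i hxa
      refine List.isChain_cons.mpr ⟨?_, ht⟩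
      intro y hy
      exact lt_of_le_of_lt hxa (hhead y hy)
    · rename_i hxa
      push_neg at hxa
      refine List.isChain_cons.mpr ⟨?_, ih ht⟩
      intro y hy
      rcases bumpA_head x t with h | h
      · exact hhead y (h ▸ hy)
      · rw [h] at hy
        exact (Option.some_inj.mp hy) ▸ hxa

lemma bumpA_ne_nil (x : Fin n) {c : Word n} (hc : c ≠ []) : (bumpA x c).1 ≠ [] := by
  have := bumpA_length x c
  intro h
  rw [h] at this
  simp at this
  exact hc (List.length_eq_zero_iff.mp this.symm)

lemma bumpA_head_le (x : Fin n) (c : Word n)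
    {y : Fin n} (hy : (bumpA x c).1.head? = some y) : y ≤ (bumpA x c).2 ∧ y ≤ x := by
  cases c with
  | nil => simp [bumpA] at hy
  | cons a t =>
    by_cases hxa : x ≤ a
    · simp only [bumpA, if_pos hxa] at hy ⊢
      simp at hy
      subst hy
      exact ⟨hxa, le_refl x⟩
    · push_neg at hxa
      simp only [bumpA, if_neg (not_le.mpr hxa)] at hy ⊢
      simp at hy
      subst hy
      exact ⟨le_of_lt (lt_of_lt_of_le hxa (le_bumpA_snd x t)), le_of_lt hxa⟩

lemma bumpA_spec (x : Fin n) :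
    ∀ c : Word n, List.Chain' (· < ·) c → (∃ m ∈ c, x ≤ m) →
      ∃ j, j < c.length ∧ (c)[j]? = some ((bumpA x c).2) ∧ (bumpA x c).1[j]? = some x ∧
        (∀ i, i ≠ j → (bumpA x c).1[i]? = (c)[i]?) ∧
        (∀ i a, i < j → (c)[i]? = some a → a < x) := by
  intro c
  induction c with
  | nil => intro _ h; simp at h
  | cons a t ih =>
    intro hc hex
    by_cases hxa : x ≤ a
    · refine ⟨0, by simp, ?_, ?_, ?_, ?_⟩
      · simp [bumpA, if_pos hxa]
      · simp [bumpA, if_pos hxa]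
      · intro i hi
        match i with
        | 0 => exact absurd rfl hi
        | (k+1) => simp [bumpA, if_pos hxa]
      · intro i a hi; omega
    · push_neg at hxa
      have hext : ∃ m ∈ t, x ≤ m := by
        rcases hex with ⟨m, hm, hxm⟩
        rcases List.mem_cons.mp hm with rfl | hm
        · exact absurd hxm (not_le.mpr hxa)
        · exact ⟨m, hm, hxm⟩
      rcases ih (List.isChain_cons.mp hc).2 hext with ⟨j, hj, h1, h2, h3, h4⟩
      refine ⟨j + 1, by simpa using hj, ?_, ?_, ?_, ?_⟩
      · simpa [bumpA, if_neg (not_le.mpr hxa)] using h1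
      · simpa [bumpA, if_neg (not_le.mpr hxa)] using h2
      · intro i hi
        match i with
        | 0 => simp [bumpA, if_neg (not_le.mpr hxa)]
        | (k+1) =>
          have : k ≠ j := by omega
          simpa [bumpA, if_neg (not_le.mpr hxa)] using h3 k this
      · intro i b hi hb
        match i with
        | 0 => simp at hb; exact hb ▸ hxa
        | (k+1) =>
          have : k < j := by omega
          exact h4 k b this (by simpa using hb)

lemma bumpA_pe (x : Fin n) :
    ∀ c : Word n, List.Chain' (· < ·) c → (∃ m ∈ c, x ≤ m) → ∀ r : Word n,
      PlacticEq n (x :: (c.reverse ++ r)) ((bumpA x c).1.reverse ++ (bumpA x c).2 :: r) := by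
  intro c
  induction c with
  | nil => intro _ h; simp at h
  | cons a t ih =>
    intro hc hex r
    by_cases hxa : x ≤ a
    · simp only [bumpA, if_pos hxa]
      have hch : List.Chain' (fun p q : Fin n => q < p) (t.reverse ++ [a]) := by
        have : List.Chain' (fun p q : Fin n => q < p) ((a :: t).reverse) := by
          rw [List.Chain', List.isChain_reverse]
          simpa [flip, List.Chain'] using hc
        simpa using this
      have := slide_small x a t.reverse r hch hxa
      simpa [List.append_assoc] using this
    · push_neg at hxa
      have hext : ∃ m ∈ t, x ≤ m := by
        rcases hex with ⟨m, hm, hxm⟩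
        rcases List.mem_cons.mp hm with rfl | hm
        · exact absurd hxm (not_le.mpr hxa)
        · exact ⟨m, hm, hxm⟩
      have htne : t ≠ [] := by
        rcases hext with ⟨m, hm, _⟩; exact List.ne_nil_of_mem hm
      have ht : List.Chain' (· < ·) t := (List.isChain_cons.mp hc).2
      have ihr := ih ht hext (a :: r)
      -- LHS : x :: (t.reverse ++ a :: r) ≡ r₁.reverse ++ o :: a :: r
      set r₁ := (bumpA x t).1 with hr₁
      set o := (bumpA x t).2 with ho
      have hr₁ne : r₁ ≠ [] := bumpA_ne_nil x htne
      obtain ⟨y, r₁', hyr⟩ : ∃ y r₁', r₁ = y :: r₁' := by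
        cases hh : r₁ with
        | nil => exact absurd hh hr₁ne
        | cons y r₁' => exact ⟨y, r₁', rfl⟩
      have hyhead : r₁.head? = some y := by rw [hyr]; rfl
      have hyo : y ≤ o ∧ y ≤ x := bumpA_head_le x t hyhead
      have hay : a < y := by
        rcases bumpA_head x t with h | h
        · rw [hyhead] at h
          cases t with
          | nil => simp at h
          | cons b t' =>
            have hab : a < b := (List.isChain_cons_cons.mp hc).1
            simp at h
            exact h ▸ hab
        · rw [hyhead] at h
          simp at h
          exact h ▸ hxa
      -- step : r₁'.reverse ++ [y, a, o] ++ r → r₁'.reverse ++ [y, o, a] ++ r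
      have step := KnuthStep.right (n := n) r₁'.reverse r a y o hay hyo.1
      have s2 : PlacticEq n (r₁.reverse ++ o :: a :: r) (r₁.reverse ++ a :: o :: r) := by
        apply pe_symm
        apply Relation.EqvGen.rel
        have e1 : r₁.reverse ++ a :: o :: r = r₁'.reverse ++ [y, a, o] ++ r := by
          rw [hyr]; simp [List.append_assoc]
        have e2 : r₁.reverse ++ o :: a :: r = r₁'.reverse ++ [y, o, a] ++ r := by
          rw [hyr]; simp [List.append_assoc]
        rw [e1, e2]
        exact step
      have goal : PlacticEq n (x :: ((a :: t).reverse ++ r)) (r₁.reverse ++ a :: o :: r) := by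
        have e : (a :: t).reverse ++ r = t.reverse ++ (a :: r) := by simp [List.append_assoc]
        rw [e]
        exact pe_trans ihr s2
      have e3 : ((bumpA x (a :: t)).1.reverse ++ (bumpA x (a :: t)).2 :: r)
          = r₁.reverse ++ a :: o :: r := by
        simp only [bumpA, if_neg (not_le.mpr hxa)]
        simp [List.append_assoc]
        rfl
      rw [e3]
      exact goal


/-- Ascending version of `ColGE`. -/
structure AColGE (k l : Word n) : Prop where
  len : l.length ≤ k.length
  le : ∀ (i : ℕ) (a b : Fin n), (k)[i]? = some a → (l)[i]? = some b → a ≤ b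

lemma aColGE_iff_colGE (k l : Word n) :
    AColGE k l ↔ ColGE k.reverse l.reverse := by
  constructor
  · rintro ⟨h1, h2⟩
    exact ⟨by simpa using h1, by simpa using h2⟩
  · rintro ⟨h1, h2⟩
    exact ⟨by simpa using h1, by simpa using h2⟩

lemma AColGE.snoc {k l : Word n} (h : AColGE k l) (x : Fin n) : AColGE (k ++ [x]) l := by
  have h1 := h.len
  refine ⟨by simp; omega, ?_⟩
  intro i a b ha hb
  have hi : i < l.length := (List.getElem?_eq_some_iff.mp hb).1
  have hi' : i < k.length := lt_of_lt_of_le hi h1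
  rw [List.getElem?_append_left hi'] at ha
  exact h.le i a b ha hb

def ColsOK (cs : List (Word n)) : Prop := ∀ c ∈ cs, c ≠ [] ∧ List.Chain' (· < ·) c

def flattenD (cs : List (Word n)) : Word n := (cs.map List.reverse).flatten

def insT (x : Fin n) : List (Word n) → List (Word n)
  | [] => [[x]]
  | c :: cs =>
    if ∀ m ∈ c, m < x then (c ++ [x]) :: cs
    else (bumpA x c).1 :: insT (bumpA x c).2 cs

/-- The hypotheses satisfied by the previous (already-updated) column `d`,
relative to the letter `x` about to be inserted into the columns `cs`. -/
def HdOK (x : Fin n) (cs : List (Word n)) (d : Word n) : Prop :=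
  (∀ c₂, cs.head? = some c₂ → AColGE d c₂) ∧
  ∃ p, p < d.length ∧ (∀ i a, i ≤ p → (d)[i]? = some a → a ≤ x) ∧
    (∀ c₂, cs.head? = some c₂ → p < c₂.length → ∃ b, (c₂)[p]? = some b ∧ x ≤ b)

lemma insT_spec (x : Fin n) :
    ∀ cs : List (Word n), ColsOK cs → List.Chain' AColGE cs →
      ColsOK (insT x cs) ∧ List.Chain' AColGE (insT x cs) ∧ (insT x cs) ≠ [] ∧
      (∀ r, PlacticEq n (x :: (flattenD cs ++ r)) (flattenD (insT x cs) ++ r)) ∧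
      (∀ d, HdOK x cs d → ∀ e, (insT x cs).head? = some e → AColGE d e) := by
  intro cs
  induction cs generalizing x with
  | nil =>
    intro _ _
    refine ⟨?_, ?_, ?_, ?_, ?_⟩
    · intro c hc
      simp [insT] at hc
      subst hc
      exact ⟨by simp, by simp [List.Chain']⟩
    · simp [insT, List.Chain']
    · simp [insT]
    · intro r
      simp only [insT, flattenD]
      simp
      exact pe_refl _
    · intro d ⟨H1, p, hp, H2, H3⟩ e he
      simp [insT] at he
      subst he
      refine ⟨by simp; omega, ?_⟩
      intro i a b ha hb
      match i with
      | 0 =>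
        simp at hb
        subst hb
        exact H2 0 a (Nat.zero_le p) ha
      | (k+1) => simp at hb
  | cons c cs' ih =>
    intro hok hch
    have hc : c ≠ [] ∧ List.Chain' (· < ·) c := hok c (by simp)
    have hok' : ColsOK cs' := fun e he => hok e (by simp [he])
    rcases List.isChain_cons.mp hch with ⟨hch1, hch2⟩
    by_cases htop : ∀ m ∈ c, m < x
    · -- new letter goes on top of column c
      have hres : insT x (c :: cs') = (c ++ [x]) :: cs' := by
        simp only [insT]
        rw [if_pos htop]
      rw [hres]
      refine ⟨?_, ?_, ?_, ?_, ?_⟩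
      · intro e he
        rcases List.mem_cons.mp he with rfl | he
        · refine ⟨by simp, ?_⟩
          rw [List.Chain', List.isChain_append]
          refine ⟨hc.2, by simp, ?_⟩
          intro y hy z hz
          simp at hz
          subst hz
          exact htop y (List.mem_of_mem_getLast? hy)
        · exact hok' e he
      · refine List.isChain_cons.mpr ⟨?_, hch2⟩
        intro e he
        exact (hch1 e he).snoc x
      · simp
      · intro r
        simp only [flattenD, List.map_cons, List.flatten_cons]
        simp [List.append_assoc]
        exact pe_refl _
      · rintro d ⟨H1, p, hp, H2, H3⟩ e he
        simp at he
        subst he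
        have hdc : AColGE d c := H1 c rfl
        have hclen : c.length ≤ p := by
          by_contra hlt
          push_neg at hlt
          rcases H3 c rfl hlt with ⟨b, hb, hxb⟩
          have : b < x := htop b (by
            have := (List.getElem?_eq_some_iff.mp hb).2
            rw [← this]
            exact List.getElem_mem _)
          exact absurd hxb (not_le.mpr this)
        refine ⟨by simp; omega, ?_⟩
        intro i a b ha hb
        rcases Nat.lt_trichotomy i c.length with hi | hi | hi
        · rw [List.getElem?_append_left hi] at hb
          exact hdc.le i a b ha hb
        · have hbx : x = b := by
            rw [List.getElem?_append_right (by omega)] at hb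
            simp [hi] at hb
            exact hb
          exact hbx ▸ H2 i a (by omega) ha
        · exfalso
          have : (c ++ [x]).length ≤ i := by simp; omega
          rw [List.getElem?_eq_none this] at hb
          exact nomatch hb
    · -- bump
      push_neg at htop
      have hex : ∃ m ∈ c, x ≤ m := by
        rcases htop with ⟨m, hm, hxm⟩
        exact ⟨m, hm, hxm⟩
      have hres : insT x (c :: cs') = (bumpA x c).1 :: insT (bumpA x c).2 cs' := by
        simp only [insT]
        rw [if_neg]
        push_neg
        rcases hex with ⟨m, hm, hxm⟩
        exact ⟨m, hm, hxm⟩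
      set c' := (bumpA x c).1 with hc'
      set o := (bumpA x c).2 with ho
      rcases bumpA_spec x c hc.2 hex with ⟨j, hj, hspec1, hspec2, hspec3, hspec4⟩
      have hxo : x ≤ o := le_bumpA_snd x c
      have hlen : c'.length = c.length := bumpA_length x c
      -- AColGE c' c₂ for any c₂ with AColGE c c₂
      have hmono : ∀ c₂ : Word n, AColGE c c₂ → AColGE c' c₂ := by
        rintro c₂ ⟨g1, g2⟩
        refine ⟨by omega, ?_⟩
        intro i a b ha hb
        by_cases hij : i = j
        · subst hij
          have hax : x = a := by rw [hspec2] at ha; simpa using ha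
          exact hax ▸ le_trans hxo (g2 i o b hspec1 hb)
        · rw [hspec3 i hij] at ha
          exact g2 i a b ha hb
      have hHd : HdOK o cs' c' := by
        refine ⟨?_, j, by omega, ?_, ?_⟩
        · intro c₂ hc₂
          exact hmono c₂ (hch1 c₂ hc₂)
        · intro i a hi ha
          rcases Nat.lt_or_ge i j with hlt | hge
          · rw [hspec3 i (by omega)] at ha
            exact le_trans (le_of_lt (hspec4 i a hlt ha)) hxo
          · have : i = j := by omega
            subst this
            rw [hspec2] at ha
            simp at ha
            subst ha
            exact hxo
        · intro c₂ hc₂ hjc₂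
          have hcc₂ := hch1 c₂ hc₂
          have hb : ∃ b', (c₂)[j]? = some b' := by
            exact ⟨c₂[j], List.getElem?_eq_getElem hjc₂⟩
          rcases hb with ⟨b', hb'⟩
          exact ⟨b', hb', hcc₂.le j o b' hspec1 hb'⟩
      rcases ih o hok' hch2 with ⟨ih1, ih2, ih3, ih4, ih5⟩
      rw [hres]
      refine ⟨?_, ?_, ?_, ?_, ?_⟩
      · intro e he
        rcases List.mem_cons.mp he with rfl | he
        · exact ⟨bumpA_ne_nil x hc.1, bumpA_chain x c hc.2⟩
        · exact ih1 e he
      · refine List.isChain_cons.mpr ⟨?_, ih2⟩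
        intro e he
        exact ih5 c' hHd e he
      · simp
      · intro r
        have e1 : flattenD (c :: cs') ++ r = c.reverse ++ (flattenD cs' ++ r) := by
          simp [flattenD, List.append_assoc]
        have e2 : flattenD (c' :: insT o cs') ++ r
            = c'.reverse ++ (flattenD (insT o cs') ++ r) := by
          simp [flattenD, List.append_assoc]
        rw [e1, e2]
        have s1 := bumpA_pe x c hc.2 hex (flattenD cs' ++ r)
        have s2 := pe_append_left c'.reverse (ih4 r)
        exact pe_trans s1 (by simpa using s2)
      · rintro d ⟨H1, p, hp, H2, H3⟩ e he
        simp at he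
        subst he
        have hdc : AColGE d c := H1 c rfl
        have hdlen := hdc.len
        have hjp : j ≤ p := by
          by_contra hgt
          push_neg at hgt
          rcases H3 c rfl (by omega) with ⟨b, hb, hxb⟩
          have := hspec4 p b hgt hb
          exact absurd hxb (not_le.mpr this)
        refine ⟨by omega, ?_⟩
        intro i a b ha hb
        by_cases hij : i = j
        · subst hij
          have hbx : x = b := by rw [hspec2] at hb; simpa using hb
          exact hbx ▸ H2 i a hjp ha
        · rw [hspec3 i hij] at hb
          exact hdc.le i a b ha hb


lemma mem_LangL_iff (w : Word n) :
    w ∈ LangL n ↔ ∃ cols, ColsOK cols ∧ List.Chain' AColGE cols ∧ w = flattenD cols := by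
  constructor
  · rintro ⟨cols, h1, h2, rfl⟩
    refine ⟨cols.map List.reverse, ?_, ?_, ?_⟩
    · intro c hc
      rcases List.mem_map.mp hc with ⟨d, hd, rfl⟩
      rcases h1 d hd with ⟨hne, hch⟩
      refine ⟨by simpa using hne, ?_⟩
      rw [List.Chain', List.isChain_reverse]
      simpa [flip, List.Chain'] using hch
    · rw [List.Chain', List.isChain_map]
      apply List.IsChain.imp _ h2
      intro a b hab
      rw [aColGE_iff_colGE]
      simpa using hab
    · simp [flattenD, List.map_map, Function.comp]
  · rintro ⟨cols, h1, h2, rfl⟩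
    refine ⟨cols.map List.reverse, ?_, ?_, rfl⟩
    · intro c hc
      rcases List.mem_map.mp hc with ⟨d, hd, rfl⟩
      rcases h1 d hd with ⟨hne, hch⟩
      refine ⟨by simpa using hne, ?_⟩
      rw [List.Chain', List.isChain_reverse]
      simpa [flip, List.Chain'] using hch
    · rw [List.Chain', List.isChain_map]
      apply List.IsChain.imp _ h2
      intro a b hab
      have := (aColGE_iff_colGE a b).mp hab
      exact this

def toCols : Word n → List (Word n)
  | [] => []
  | a :: w => insT a (toCols w)

lemma toCols_spec (w : Word n) :
    ColsOK (toCols (n := n) w) ∧ List.Chain' AColGE (toCols (n := n) w) ∧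
      PlacticEq n (flattenD (toCols w)) w := by
  induction w with
  | nil =>
    refine ⟨?_, ?_, ?_⟩
    · intro c hc; simp [toCols] at hc
    · simp [toCols, List.Chain']
    · simp [toCols, flattenD]; exact pe_refl _
  | cons a w ih =>
    rcases ih with ⟨ih1, ih2, ih3⟩
    rcases insT_spec a (toCols w) ih1 ih2 with ⟨s1, s2, _, s4, _⟩
    refine ⟨s1, s2, ?_⟩
    have h1 := s4 []
    simp at h1
    have h2 : PlacticEq n (flattenD (toCols (a :: w))) (a :: flattenD (toCols w)) := by
      simpa [toCols] using pe_symm h1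
    exact pe_trans h2 (pe_cons a ih3)

lemma part2 (w : Word n) : ∃ v ∈ LangL n, PlacticEq n v w := by
  rcases toCols_spec (n := n) w with ⟨h1, h2, h3⟩
  exact ⟨flattenD (toCols w), (mem_LangL_iff _).mpr ⟨toCols w, h1, h2, rfl⟩, h3⟩


/-! ### The DFA recognizing `LangL` -/

attribute [local instance] Classical.propDecidable

/-- States of the DFA: `none` is the dead state; `some (P, S)` means the set of
letters of the current (partially read) column is `S`, and `P` is the set of letters
of the previous completed column (if any). The start state is `some (none, ∅)`. -/
abbrev StL (n : ℕ) := Option (Option (Finset (Fin n)) × Finset (Fin n))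

def sortA (S : Finset (Fin n)) : Word n := S.sort (· ≤ ·)

lemma sortA_chain (S : Finset (Fin n)) : List.Chain' (· < ·) (sortA S) :=
  List.isChain_iff_pairwise.mpr (Finset.sortedLT_sort S).pairwise

lemma mem_sortA {S : Finset (Fin n)} {b : Fin n} : b ∈ sortA S ↔ b ∈ S := Finset.mem_sort _

lemma sortA_empty : sortA (∅ : Finset (Fin n)) = [] := Finset.sort_empty (· ≤ ·)

lemma sortA_insert {S : Finset (Fin n)} {a : Fin n} (h : ∀ b ∈ S, a < b) :
    sortA (insert a S) = a :: sortA S := by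
  have hna : a ∉ S := fun hmem => absurd (h a hmem) (lt_irrefl a)
  refine (fun hp h1 h2 => List.Perm.eq_of_pairwise' (r := (· ≤ ·)) h1 h2 hp) ?_ ?_ ?_
  · exact ((insert a S).sort_perm_toList (· ≤ ·)).trans
      ((Finset.toList_insert hna).trans (List.Perm.cons a (S.sort_perm_toList (· ≤ ·)).symm))
  · exact Finset.pairwise_sort _ _
  · refine List.pairwise_cons.mpr ⟨?_, Finset.pairwise_sort _ _⟩
    intro b hb
    exact le_of_lt (h b (mem_sortA.mp hb))

/-- `CheckP P C`: the completed column `C` (ascending) is compatible with the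
previous column recorded in `P`. -/
def CheckP (P : Option (Finset (Fin n))) (C : Word n) : Prop :=
  ∀ Q, P = some Q → AColGE (sortA Q) C

noncomputable def colStep : StL n → Fin n → StL n
  | none, _ => none
  | some (P, S), a =>
      if ∀ b ∈ S, a < b then some (P, insert a S)
      else if CheckP P (sortA S) then some (some S, {a}) else none

def colAccept : Set (StL n) :=
  { s | match s with
        | none => False
        | some (P, S) => CheckP P (sortA S) }

noncomputable def colDFA (n : ℕ) : DFA (Fin n) (StL n) :=
  ⟨colStep, some (none, ∅), colAccept⟩

/-- The language accepted starting just after the completed column `P`. -/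
def TailLang (P : Word n) : Language (Fin n) :=
  { w | ∃ cols, ColsOK cols ∧ List.Chain' AColGE (P :: cols) ∧ w = flattenD cols }

/-- The language accepted from each state. -/
def Good : StL n → Language (Fin n)
  | none => {_u | False}
  | some (P, S) =>
      { u | ∃ e v, u = e.reverse ++ v ∧ List.Chain' (· < ·) (e ++ sortA S) ∧
          CheckP P (e ++ sortA S) ∧ v ∈ TailLang (e ++ sortA S) }

lemma tailLang_nil (C : Word n) : ([] : Word n) ∈ TailLang C :=
  ⟨[], fun c hc => absurd hc List.not_mem_nil, by simp [List.Chain'], by simp [flattenD]⟩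

lemma tailLang_cons {C v : Word n} (hv : v ∈ TailLang C) (hne : v ≠ []) :
    ∃ c₁ v', c₁ ≠ [] ∧ List.Chain' (· < ·) c₁ ∧ AColGE C c₁ ∧ v' ∈ TailLang c₁ ∧
      v = c₁.reverse ++ v' := by
  rcases hv with ⟨cols, h1, h2, rfl⟩
  cases cols with
  | nil => simp [flattenD] at hne
  | cons c₁ cols' =>
    rcases List.isChain_cons_cons.mp h2 with ⟨hC1, h2'⟩
    rcases h1 c₁ (by simp) with ⟨hne1, hch1⟩
    refine ⟨c₁, flattenD cols', hne1, hch1, hC1, ?_, by simp [flattenD]⟩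
    exact ⟨cols', fun c hc => h1 c (by simp [hc]), h2', rfl⟩

lemma tailLang_build {C c₁ v' : Word n} (hne : c₁ ≠ []) (hch : List.Chain' (· < ·) c₁)
    (hge : AColGE C c₁) (hv : v' ∈ TailLang c₁) : c₁.reverse ++ v' ∈ TailLang C := by
  rcases hv with ⟨cols, h1, h2, rfl⟩
  refine ⟨c₁ :: cols, ?_, ?_, by simp [flattenD]⟩
  · intro c hc
    rcases List.mem_cons.mp hc with rfl | hc
    · exact ⟨hne, hch⟩
    · exact h1 c hc
  · exact List.isChain_cons_cons.mpr ⟨hge, h2⟩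


lemma good_nil (s : StL n) : ([] : Word n) ∈ Good s ↔ s ∈ colAccept := by
  cases s with
  | none => exact iff_of_false (fun h => h) (fun h => h)
  | some ps =>
    rcases ps with ⟨P, S⟩
    constructor
    · rintro ⟨e, v, hu, hch, hCk, hv⟩
      have he : e = [] ∧ v = [] := by
        constructor
        · rcases List.append_eq_nil_iff.mp hu.symm with ⟨h1, _⟩
          exact List.reverse_eq_nil_iff.mp h1
        · exact (List.append_eq_nil_iff.mp hu.symm).2
      rcases he with ⟨rfl, rfl⟩
      simpa [colAccept] using hCk
    · intro hCk
      exact ⟨[], [], rfl, by simpa using sortA_chain S, by simpa [colAccept] using hCk, tailLang_nil _⟩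

lemma first_letter_ge {C c₁ v' u : Word n} {a : Fin n}
    (hge : AColGE C c₁) (hne : c₁ ≠ []) (heq : (a :: u : Word n) = c₁.reverse ++ v') :
    ∃ m ∈ C, m ≤ a := by
  rcases (List.eq_nil_or_concat c₁) with rfl | ⟨c₁', y, rfl⟩
  · exact absurd rfl hne
  · simp only [List.concat_eq_append] at heq hge hne ⊢
    have hb : (c₁' ++ [y]).reverse = y :: c₁'.reverse := by simp
    rw [hb] at heq
    have hay : a = y := by
      have := congrArg List.head? heq
      simpa using this
    subst hay
    have hi : c₁'.length < (c₁' ++ [a]).length := by simp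
    have hiC : c₁'.length < C.length := lt_of_lt_of_le hi hge.len
    have h1 : (c₁' ++ [a])[c₁'.length]? = some a := by
      rw [List.getElem?_append_right (le_refl _)]
      simp
    have h2 : (C)[c₁'.length]? = some (C[c₁'.length]'hiC) := List.getElem?_eq_getElem hiC
    refine ⟨C[c₁'.length]'hiC, List.getElem_mem _, hge.le _ _ _ h2 h1⟩

lemma e_nil_forced {S : Finset (Fin n)} {e v u : Word n} {a b : Fin n}
    (hbS : b ∈ S) (hba : b ≤ a) (heq : (a :: u : Word n) = e.reverse ++ v)
    (hch : List.Chain' (· < ·) (e ++ sortA S)) : e = [] := by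
  rcases (List.eq_nil_or_concat e) with rfl | ⟨e', x, rfl⟩
  · rfl
  · exfalso
    simp only [List.concat_eq_append] at heq hch
    have hb : (e' ++ [x]).reverse = x :: e'.reverse := by simp
    rw [hb] at heq
    have hax : a = x := by
      have := congrArg List.head? heq
      simpa using this
    subst hax
    have hpw : List.Pairwise (· < ·) ((e' ++ [a]) ++ sortA S) :=
      List.isChain_iff_pairwise.mp hch
    rw [List.pairwise_append] at hpw
    have : a < b := hpw.2.2 a (by simp) b (mem_sortA.mpr hbS)
    exact absurd hba (not_le.mpr this)

lemma good_step (s : StL n) (a : Fin n) (u : Word n) :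
    u ∈ Good (colStep s a) ↔ (a :: u) ∈ Good s := by
  cases s with
  | none => exact Iff.rfl
  | some ps =>
    rcases ps with ⟨P, S⟩
    by_cases hcont : ∀ b ∈ S, a < b
    · rw [show colStep (some (P, S)) a = some (P, insert a S) by
        simp [colStep, if_pos hcont]]
      have hins : sortA (insert a S) = a :: sortA S := sortA_insert hcont
      constructor
      · rintro ⟨e', v, hu, hch, hCk, hv⟩
        rw [hins] at hch hCk hv
        refine ⟨e' ++ [a], v, by rw [hu]; simp, ?_, ?_, ?_⟩
        · simpa [List.append_assoc] using hch
        · simpa [List.append_assoc] using hCk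
        · simpa [List.append_assoc] using hv
      · rintro ⟨e, v, hu, hch, hCk, hv⟩
        have hene : e ≠ [] := by
          rintro rfl
          simp at hu hch hCk hv
          have hvne : v ≠ [] := by rw [← hu]; simp
          rcases tailLang_cons hv hvne with ⟨c₁, v', hc1ne, _, hge, _, heq⟩
          rcases first_letter_ge hge hc1ne (hu.trans heq) with ⟨m, hm, hma⟩
          exact absurd (hcont m (mem_sortA.mp hm)) (not_lt.mpr hma)
        rcases (List.eq_nil_or_concat e) with rfl | ⟨e', x, rfl⟩
        · exact absurd rfl hene
        · simp only [List.concat_eq_append] at hu hch hCk hv ⊢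
          have hb : (e' ++ [x]).reverse = x :: e'.reverse := by simp
          rw [hb] at hu
          have hax : a = x := by
            have := congrArg List.head? hu
            simpa using this
          subst hax
          have hu' : u = e'.reverse ++ v := by
            have := congrArg List.tail hu
            simpa using this
          rw [show (e' ++ [a]) ++ sortA S = e' ++ (a :: sortA S) by simp] at hch hCk hv
          rw [← hins] at hch hCk hv
          exact ⟨e', v, hu', hch, hCk, hv⟩
    · push_neg at hcont
      rcases hcont with ⟨b, hbS, hba⟩
      have hba' : b ≤ a := hba
      have hnall : ¬ ∀ b ∈ S, a < b := by
        push_neg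
        exact ⟨b, hbS, hba⟩
      have hsa : sortA ({a} : Finset (Fin n)) = [a] := Finset.sort_singleton _ a
      by_cases hCk : CheckP P (sortA S)
      · rw [show colStep (some (P, S)) a = some (some S, {a}) by
          simp [colStep, if_neg hnall, if_pos hCk]]
        constructor
        · rintro ⟨e', v', hu, hch, hCk', hv'⟩
          rw [hsa] at hch hCk' hv'
          have hge : AColGE (sortA S) (e' ++ [a]) := hCk' S rfl
          refine ⟨[], (e' ++ [a]).reverse ++ v', ?_, by simpa using sortA_chain S,
            by simpa using hCk, ?_⟩
          · rw [hu]; simp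
          · have := tailLang_build (C := sortA S) (by simp) hch hge hv'
            simpa using this
        · rintro ⟨e, v, hu, hch, _, hv⟩
          have he : e = [] := e_nil_forced hbS hba' hu hch
          subst he
          simp at hu hv
          have hvne : v ≠ [] := by rw [← hu]; simp
          rcases tailLang_cons hv hvne with ⟨c₁, v', hc1ne, hc1ch, hge, hv', heq⟩
          rcases (List.eq_nil_or_concat c₁) with rfl | ⟨c₁', y, rfl⟩
          · exact absurd rfl hc1ne
          · simp only [List.concat_eq_append] at heq hc1ch hge hv' ⊢
            have hb2 : (c₁' ++ [y]).reverse = y :: c₁'.reverse := by simp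
            rw [hb2] at heq
            have heq' : (a :: u : Word n) = y :: (c₁'.reverse ++ v') := hu.trans heq
            have hay : a = y := by
              have := congrArg List.head? heq'
              simpa using this
            subst hay
            have hu' : u = c₁'.reverse ++ v' := by
              have := congrArg List.tail heq'
              simpa using this
            refine ⟨c₁', v', hu', ?_, ?_, ?_⟩
            · rw [hsa]; exact hc1ch
            · rw [hsa]
              intro Q hQ
              injection hQ with hQ'
              rw [← hQ']
              exact hge
            · rw [hsa]; exact hv'
      · rw [show colStep (some (P, S)) a = none by
          simp [colStep, if_neg hnall, if_neg hCk]]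
        constructor
        · rintro ⟨⟩
        · rintro ⟨e, v, hu, hch, hCk', hv⟩
          exfalso
          have he : e = [] := e_nil_forced hbS hba' hu hch
          subst he
          simp at hCk'
          exact hCk hCk'

lemma good_eval : ∀ (w : Word n) (s : StL n),
    ((colDFA n).evalFrom s w ∈ (colDFA n).accept) ↔ w ∈ Good s := by
  intro w
  induction w with
  | nil =>
    intro s
    rw [DFA.evalFrom_nil]
    exact (good_nil s).symm
  | cons a w ih =>
    intro s
    have hstep : (colDFA n).evalFrom s (a :: w) = (colDFA n).evalFrom (colStep s a) w := rfl
    rw [hstep]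
    rw [ih (colStep s a)]
    exact good_step s a w

lemma good_start : Good (some ((none : Option (Finset (Fin n))), (∅ : Finset (Fin n)))) = LangL n := by
  ext u
  constructor
  · rintro ⟨e, v, hu, hch, _, hv⟩
    rw [sortA_empty] at hch hv
    simp at hch hv
    rcases hv with ⟨cols, h1, h2, rfl⟩
    rw [mem_LangL_iff]
    by_cases hene : e = []
    · subst hene
      cases cols with
      | nil => exact ⟨[], fun c hc => absurd hc List.not_mem_nil, by simp [List.Chain'], by simpa using hu⟩
      | cons c₁ cols' =>
        exfalso
        have hge : AColGE [] c₁ := (List.isChain_cons_cons.mp h2).1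
        have := hge.len
        simp at this
        exact (h1 c₁ (by simp)).1 this
    · refine ⟨e :: cols, ?_, ?_, ?_⟩
      · intro c hc
        rcases List.mem_cons.mp hc with rfl | hc
        · exact ⟨hene, hch⟩
        · exact h1 c hc
      · exact h2
      · rw [hu]; simp [flattenD]
  · intro hu
    rw [mem_LangL_iff] at hu
    rcases hu with ⟨cols, h1, h2, rfl⟩
    cases cols with
    | nil =>
      exact ⟨[], [], by simp [flattenD], by simp [sortA_empty, List.Chain'], fun Q hQ => by simp at hQ,
        by simpa [sortA_empty] using tailLang_nil ([] : Word n)⟩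
    | cons c₁ cols' =>
      refine ⟨c₁, flattenD cols', by simp [flattenD], ?_, fun Q hQ => by simp at hQ, ?_⟩
      · simpa [sortA_empty] using (h1 c₁ (by simp)).2
      · rw [sortA_empty]
        simp
        exact ⟨cols', fun c hc => h1 c (by simp [hc]), h2, rfl⟩

lemma part1 : (LangL n).IsRegular := by
  refine ⟨StL n, inferInstance, colDFA n, ?_⟩
  ext w
  rw [DFA.mem_accepts]
  show ((colDFA n).evalFrom (colDFA n).start w ∈ (colDFA n).accept) ↔ _
  rw [good_eval w (colDFA n).start]
  show w ∈ Good (some (none, ∅)) ↔ _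
  rw [good_start]

end Plactic14

/-- `L` is a regular language over `A`, and every element of
the Plactic monoid `M_n` has at least one representative in `L`. -/
theorem statement14 (n : ℕ) :
    (LangL n).IsRegular ∧ (∀ w : Word n, ∃ v ∈ LangL n, PlacticEq n v w) :=
  ⟨Plactic14.part1, fun w => Plactic14.part2 w⟩
end
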